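/- arXiv:2207.06775 — 5 statements merged into one kernel-verified Lean document; each statement's English description precedes it below -/
import Mathlib

section
/- Let l ≥ d+1, let D_L ∈ ℝ^{l×l} be symmetric with nonnegative entries and zero diagonal, let κ > 0, and set A_L := cosh(√κ D_L) (cosh applied entrywise). Let A_L = Q diag(λ₁, …, λ_l) Q^⊤ be an eigendecomposition with Q orthogonal with columns q₁, …, q_l and λ₁ ≥ λ₂ ≥ ⋯ ≥ λ_l, and assume λ_{l−d+1} < 0 (i.e. A_L has at least d strictly negative eigenvalues). Then λ₁ > 0, and the matrix X̂_L ∈ ℝ^{l×(d+1)} with columns √λ₁ q₁, √(−λ_{l−d+1}) q_{l−d+1}, …, √(−λ_l) q_l satisfies ‖A_L − X̂_L J X̂_L^⊤‖_F ≤ ‖A_L − X J X^⊤‖_F for every X ∈ ℝ^{l×(d+1)}. -/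
open Matrix Finset

/-- The Lorentz signature matrix `J = diag(1, -1, …, -1)` of size `(d+1) × (d+1)`. -/
noncomputable def lorJ (d : ℕ) : Matrix (Fin (d + 1)) (Fin (d + 1)) ℝ :=
  Matrix.diagonal (fun i => if i = 0 then (1 : ℝ) else -1)

/-- The Lorentz product `x ∘ y = x₁y₁ - (x₂y₂ + ⋯ + x_{d+1}y_{d+1})`. -/
noncomputable def lprod (d : ℕ) (x y : Fin (d + 1) → ℝ) : ℝ :=
  x 0 * y 0 - ∑ i : Fin d, x i.succ * y i.succ

/-- The hyperboloid `H_d = {x : x ∘ x = 1, x₁ > 0}`. -/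
def onHyperboloid (d : ℕ) (x : Fin (d + 1) → ℝ) : Prop :=
  lprod d x x = 1 ∧ 0 < x 0

/-- The inverse hyperbolic cosine. -/
noncomputable def arcosh (x : ℝ) : ℝ :=
  Real.log (x + Real.sqrt (x ^ 2 - 1))

/-- The hyperbolic distance with curvature `-κ`. -/
noncomputable def distH (d : ℕ) (κ : ℝ) (x y : Fin (d + 1) → ℝ) : ℝ :=
  (1 / Real.sqrt κ) * arcosh (lprod d x y)

/-- A positive Lorentz matrix: `Tᵀ J T = J` and `T₁₁ > 0`. -/
def IsPosLorentz (d : ℕ) (T : Matrix (Fin (d + 1)) (Fin (d + 1)) ℝ) : Prop :=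
  Tᵀ * lorJ d * T = lorJ d ∧ 0 < T 0 0

/-- The eigenvalue index selected for column `j` of the `L-hydra` embedding:
column `0` selects eigenvalue index `0` (the largest eigenvalue `λ₁`), and column
`j ≥ 1` selects the `j`-th of the `d` smallest eigenvalues `λ_{l-d+1}, …, λ_l`
(in 0-based indexing: `l - d - 1 + j`). -/
def colIdx {d l : ℕ} (hl : d + 1 ≤ l) (j : Fin (d + 1)) : Fin l :=
  if (j : ℕ) = 0 then ⟨0, by omega⟩ else ⟨l - d - 1 + j, by have := j.isLt; omega⟩

/-- The landmark embedding matrix `X̂_L` with columns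
`√λ₁ q₁, √(−λ_{l−d+1}) q_{l−d+1}, …, √(−λ_l) q_l`. -/
noncomputable def hatXL {d l : ℕ} (hl : d + 1 ≤ l) (Q : Matrix (Fin l) (Fin l) ℝ)
    (lam : Fin l → ℝ) : Matrix (Fin l) (Fin (d + 1)) ℝ :=
  Matrix.of fun i j =>
    (if (j : ℕ) = 0 then Real.sqrt (lam (colIdx hl j))
      else Real.sqrt (-lam (colIdx hl j))) * Q i (colIdx hl j)

/-- The diagonal matrix `diag(1/λ₁, −1/λ_{l−d+1}, …, −1/λ_l)`. -/
noncomputable def hatD {d l : ℕ} (hl : d + 1 ≤ l) (lam : Fin l → ℝ) :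
    Matrix (Fin (d + 1)) (Fin (d + 1)) ℝ :=
  Matrix.diagonal fun j =>
    if (j : ℕ) = 0 then 1 / lam (colIdx hl j) else -(1 / lam (colIdx hl j))

/-- The non-landmark embedding matrix `X̂_N = A_N X̂_L diag(1/λ₁, −1/λ_{l−d+1}, …, −1/λ_l)`. -/
noncomputable def hatXN {d l m : ℕ} (hl : d + 1 ≤ l) (A_N : Matrix (Fin m) (Fin l) ℝ)
    (Q : Matrix (Fin l) (Fin l) ℝ) (lam : Fin l → ℝ) : Matrix (Fin m) (Fin (d + 1)) ℝ :=
  A_N * hatXL hl Q lam * hatD hl lam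

/-- The squared Frobenius norm of a matrix. -/
noncomputable def frobSq {a b : ℕ} (A : Matrix (Fin a) (Fin b) ℝ) : ℝ :=
  ∑ i, ∑ j, (A i j) ^ 2

/-- The Frobenius norm of a matrix. -/
noncomputable def frob {a b : ℕ} (A : Matrix (Fin a) (Fin b) ℝ) : ℝ :=
  Real.sqrt (frobSq A)

lemma frobSq_eq_trace {a b : ℕ} (A : Matrix (Fin a) (Fin b) ℝ) :
    frobSq A = Matrix.trace (Aᵀ * A) := by
  simp [frobSq, Matrix.trace, Matrix.mul_apply, Matrix.diag, pow_two]
  rw [Finset.sum_comm]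

lemma frobSq_conj {n : ℕ} (Q M : Matrix (Fin n) (Fin n) ℝ) (hQ : Qᵀ * Q = 1) :
    frobSq (Q * M * Qᵀ) = frobSq M := by
  rw [frobSq_eq_trace, frobSq_eq_trace]
  have : (Q * M * Qᵀ)ᵀ * (Q * M * Qᵀ) = Q * (Mᵀ * M) * Qᵀ := by
    simp only [Matrix.transpose_mul, Matrix.transpose_transpose, Matrix.mul_assoc]
    rw [← Matrix.mul_assoc Qᵀ Q, hQ, Matrix.one_mul]
  rw [this, Matrix.trace_mul_cycle, ← Matrix.mul_assoc, hQ, Matrix.one_mul]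

lemma frobSq_diagonal {n : ℕ} (f : Fin n → ℝ) :
    frobSq (Matrix.diagonal f) = ∑ i, (f i) ^ 2 := by
  unfold frobSq
  congr 1; funext i
  rw [Finset.sum_eq_single i]
  · simp
  · intro j _ hj; simp [Matrix.diagonal_apply_ne' _ hj]
  · simp

lemma sum_last {l : ℕ} (hl0 : 0 < l) (f : Fin l → ℝ) (m : ℕ) (hml : m ≤ l) :
    ∑ t ∈ Finset.range m, f ⟨l - 1 - t, by omega⟩
      = ∑ i ∈ Finset.univ.filter (fun i : Fin l => l - m ≤ (i : ℕ)), f i := by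
  apply Finset.sum_nbij' (fun t => (⟨l - 1 - t, by omega⟩ : Fin l))
      (fun i => l - 1 - (i : ℕ))
  · intro t ht
    simp only [Finset.mem_range] at ht
    simp only [Finset.mem_filter, Finset.mem_univ, true_and]
    omega
  · intro i hi
    simp only [Finset.mem_filter, Finset.mem_univ, true_and] at hi
    simp only [Finset.mem_range]
    have := i.isLt
    omega
  · intro t ht
    simp only [Finset.mem_range] at ht
    simp only [Fin.val_mk]
    omega
  · intro i hi
    simp only [Finset.mem_filter, Finset.mem_univ, true_and] at hi
    have := i.isLt
    apply Fin.ext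
    simp only [Fin.val_mk]
    omega
  · intro t ht; rfl

lemma c_lemma {l : ℕ} (hl0 : 0 < l) (lam : Fin l → ℝ)
    (hdesc : ∀ i j : Fin l, i ≤ j → lam j ≤ lam i)
    (c : Fin l → ℝ) (hc0 : ∀ i, 0 ≤ c i) (hc1 : ∀ i, c i ≤ 1)
    (m : ℕ) (hm1 : 1 ≤ m) (hml : m ≤ l) (hsum : ∑ i, c i = m) :
    ∑ t ∈ Finset.range m, lam ⟨l - 1 - t, by omega⟩ ≤ ∑ i, lam i * c i := by
  set ts := lam ⟨l - m, by omega⟩ with hts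
  rw [sum_last hl0 lam m hml]
  set F := Finset.univ.filter (fun i : Fin l => l - m ≤ (i : ℕ)) with hF
  have hconst : ∑ _i ∈ F, ts = (m : ℝ) * ts := by
    rw [← sum_last hl0 (fun _ => ts) m hml, Finset.sum_const, Finset.card_range]
    simp [nsmul_eq_mul]
  have e1 : ∑ i, (lam i - ts) * c i = ∑ i, lam i * c i - ts * (m : ℝ) := by
    have : ∑ i, (lam i - ts) * c i = ∑ i, (lam i * c i - ts * c i) := by
      apply Finset.sum_congr rfl; intro i _; ring
    rw [this, Finset.sum_sub_distrib, ← Finset.mul_sum, hsum]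
  have e2 : ∑ i ∈ F, (lam i - ts) = ∑ i ∈ F, lam i - (m : ℝ) * ts := by
    rw [Finset.sum_sub_distrib, hconst]
  have main : ∑ i ∈ F, (lam i - ts) ≤ ∑ i, (lam i - ts) * c i := by
    rw [← Finset.sum_filter_add_sum_filter_not Finset.univ (fun i : Fin l => l - m ≤ (i : ℕ))
      (fun i => (lam i - ts) * c i)]
    have h1 : ∑ i ∈ F, (lam i - ts) ≤ ∑ i ∈ F, (lam i - ts) * c i := by
      apply Finset.sum_le_sum
      intro i hi
      rw [hF, Finset.mem_filter] at hi
      have hle : lam i ≤ ts := hdesc ⟨l - m, by omega⟩ i (by simp [Fin.le_def]; omega)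
      nlinarith [hc0 i, hc1 i]
    have h2 : 0 ≤ ∑ i ∈ Finset.univ.filter (fun i : Fin l => ¬ (l - m ≤ (i : ℕ))), (lam i - ts) * c i := by
      apply Finset.sum_nonneg
      intro i hi
      rw [Finset.mem_filter] at hi
      have hge : ts ≤ lam i := hdesc i ⟨l - m, by omega⟩ (by simp [Fin.le_def]; omega)
      have := hc0 i
      nlinarith
    rw [hF] at h1 ⊢
    linarith
  linarith


lemma abel_ineq (n : ℕ) (ν a : ℕ → ℝ)
    (hmono : ∀ i j, i ≤ j → j ≤ n → ν j ≤ ν i) (hν0 : 0 ≤ ν n)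
    (ha : ∀ m, m ≤ n → 0 ≤ ∑ t ∈ Finset.range m, a t) :
    0 ≤ ∑ t ∈ Finset.range n, ν t * a t := by
  induction n generalizing ν with
  | zero => simp
  | succ n ih =>
    have key : ∑ t ∈ Finset.range (n+1), ν t * a t
        = ∑ t ∈ Finset.range n, (ν t - ν n) * a t + ν n * ∑ t ∈ Finset.range (n+1), a t := by
      rw [Finset.sum_range_succ, Finset.sum_range_succ a,
        Finset.sum_congr rfl (fun t (_ : t ∈ Finset.range n) =>
          (by ring : ν t * a t = (ν t - ν n) * a t + ν n * a t)),
        Finset.sum_add_distrib, ← Finset.mul_sum]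
      ring
    rw [key]
    have h1 : 0 ≤ ∑ t ∈ Finset.range n, (ν t - ν n) * a t := by
      apply ih (fun t => ν t - ν n)
      · intro i j hij hjn
        have := hmono i j hij (by omega); linarith
      · linarith
      · intro m hm; exact ha m (by omega)
    have hνn : 0 ≤ ν n := le_trans hν0 (hmono n (n+1) (by omega) le_rfl)
    have h2 : 0 ≤ ν n * ∑ t ∈ Finset.range (n+1), a t :=
      mul_nonneg hνn (ha (n+1) le_rfl)
    linarith


lemma exists_ker_vec {ι κ : Type*} [Fintype ι] [Fintype κ] [DecidableEq ι]
    (M : Matrix κ ι ℝ) (h : Fintype.card κ < Fintype.card ι) :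
    ∃ c : ι → ℝ, c ≠ 0 ∧ M.mulVec c = 0 := by
  by_contra hc
  push_neg at hc
  have hinj : Function.Injective M.mulVecLin := by
    rw [← LinearMap.ker_eq_bot, LinearMap.ker_eq_bot']
    intro c hMc
    by_contra hne
    exact (hc c hne) hMc
  have := LinearMap.finrank_le_finrank_of_injective hinj
  rw [Module.finrank_fintype_fun_eq_card, Module.finrank_fintype_fun_eq_card] at this
  omega

section LB
variable {d l : ℕ}

set_option maxHeartbeats 2000000 in
lemma lower_bound (hd : 1 ≤ d) (hl : d + 1 ≤ l)
    (lam : Fin l → ℝ) (hdesc : ∀ i j : Fin l, i ≤ j → lam j ≤ lam i)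
    (Y : Matrix (Fin l) (Fin (d + 1)) ℝ) :
    ∑ i, lam i ^ 2 - lam ⟨0, Nat.lt_of_lt_of_le (Nat.succ_pos d) hl⟩ ^ 2
        - ∑ t ∈ Finset.range d, lam ⟨l - 1 - t, by omega⟩ ^ 2
      ≤ frobSq (Matrix.diagonal lam - Y * lorJ d * Yᵀ) := by
  have hl0 : 0 < l := by omega
  set lam0 := lam ⟨0, by omega⟩ with hlam0def
  set B := Y * lorJ d * Yᵀ with hBdef
  have hBsym : Bᵀ = B := by
    rw [hBdef, Matrix.transpose_mul, Matrix.transpose_mul, Matrix.transpose_transpose]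
    rw [show (lorJ d)ᵀ = lorJ d from Matrix.diagonal_transpose _, Matrix.mul_assoc]
  have hH : B.IsHermitian := by
    rw [Matrix.IsHermitian, Matrix.conjTranspose_eq_transpose_of_trivial]; exact hBsym
  set W : Matrix (Fin l) (Fin l) ℝ := (hH.eigenvectorUnitary : Matrix (Fin l) (Fin l) ℝ) with hW
  set μ : Fin l → ℝ := hH.eigenvalues with hμ
  have hspec : B = W * Matrix.diagonal μ * Wᵀ := by
    have := hH.spectral_theorem
    rw [Unitary.conjStarAlgAut_apply] at this
    rw [Matrix.star_eq_conjTranspose, Matrix.conjTranspose_eq_transpose_of_trivial] at this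
    exact this
  have h1 : Wᵀ * W = 1 := by
    have h := hH.eigenvectorUnitary.2
    rw [Matrix.mem_unitaryGroup_iff'] at h
    rw [Matrix.star_eq_conjTranspose, Matrix.conjTranspose_eq_transpose_of_trivial] at h
    exact h
  have h2 : W * Wᵀ = 1 := mul_eq_one_comm.mp h1
  -- column and row norms
  have hcol : ∀ k, ∑ i, (W i k) ^ 2 = 1 := by
    intro k
    have := congrFun (congrFun h1 k) k
    simpa [Matrix.mul_apply, Matrix.one_apply, pow_two] using this
  have hrow : ∀ i, ∑ k, (W i k) ^ 2 = 1 := by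
    intro i
    have := congrFun (congrFun h2 i) i
    simpa [Matrix.mul_apply, Matrix.one_apply, pow_two] using this
  set r : Fin l → ℝ := fun k => ∑ i, lam i * (W i k) ^ 2 with hr
  -- diagonal entries of B
  have hBdiag : ∀ i, B i i = ∑ k, μ k * (W i k) ^ 2 := by
    intro i
    rw [hspec]
    rw [Matrix.mul_apply]
    simp only [Matrix.mul_diagonal, Matrix.transpose_apply]
    apply Finset.sum_congr rfl
    intro k _
    ring
  -- frobSq B
  have hfrobB : frobSq B = ∑ k, μ k ^ 2 := by
    rw [hspec, frobSq_conj W _ h1, frobSq_diagonal]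
  -- cross term
  have hcross : ∑ i, ∑ j, (Matrix.diagonal lam) i j * B i j = ∑ k, μ k * r k := by
    have step1 : ∀ i, ∑ j, (Matrix.diagonal lam) i j * B i j = lam i * B i i := by
      intro i
      rw [Finset.sum_eq_single i]
      · rw [Matrix.diagonal_apply_eq]
      · intro j _ hj; rw [Matrix.diagonal_apply_ne _ (Ne.symm hj), zero_mul]
      · simp
    rw [Finset.sum_congr rfl (fun i _ => step1 i)]
    calc ∑ i, lam i * B i i = ∑ i, ∑ k, μ k * (lam i * (W i k) ^ 2) := by
          apply Finset.sum_congr rfl; intro i _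
          rw [hBdiag i, Finset.mul_sum]
          apply Finset.sum_congr rfl; intro k _; ring
      _ = ∑ k, ∑ i, μ k * (lam i * (W i k) ^ 2) := Finset.sum_comm
      _ = ∑ k, μ k * r k := by
          apply Finset.sum_congr rfl; intro k _
          rw [hr, Finset.mul_sum]
  -- expansion
  have hexp : frobSq (Matrix.diagonal lam - B)
      = ∑ i, lam i ^ 2 + ∑ k, μ k ^ 2 - 2 * ∑ k, μ k * r k := by
    have e : ∀ i j, ((Matrix.diagonal lam - B) i j) ^ 2
        = ((Matrix.diagonal lam) i j) ^ 2 + (B i j) ^ 2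
          - 2 * ((Matrix.diagonal lam) i j * B i j) := by
      intro i j
      rw [Matrix.sub_apply]; ring
    unfold frobSq
    rw [Finset.sum_congr rfl (fun i _ => Finset.sum_congr rfl (fun j _ => e i j))]
    simp only [Finset.sum_sub_distrib, Finset.sum_add_distrib, ← Finset.mul_sum]
    rw [← hcross]
    have d1 : ∑ i, ∑ j, ((Matrix.diagonal lam) i j) ^ 2 = ∑ i, lam i ^ 2 := frobSq_diagonal lam
    have d2 : ∑ i, ∑ j, (B i j) ^ 2 = ∑ k, μ k ^ 2 := hfrobB
    rw [d1, d2]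
  -- quadratic form identity
  set T : Matrix (Fin (d + 1)) (Fin l) ℝ := Yᵀ * W with hT
  have hTJT : Tᵀ * lorJ d * T = Matrix.diagonal μ := by
    have key : Tᵀ * lorJ d * T = Wᵀ * B * W := by
      rw [hT, hBdef, Matrix.transpose_mul, Matrix.transpose_transpose]
      simp only [Matrix.mul_assoc]
    rw [key, hspec]
    simp only [← Matrix.mul_assoc]
    rw [h1, Matrix.one_mul, Matrix.mul_assoc, h1, Matrix.mul_one]
  have e3 : ∀ (u : Fin (d + 1) → ℝ),
      ∑ j, (if j = 0 then (1 : ℝ) else -1) * (u j) ^ 2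
        = (u 0) ^ 2 - ∑ j ∈ Finset.univ.erase 0, (u j) ^ 2 := by
    intro u
    rw [← Finset.add_sum_erase _ _ (Finset.mem_univ (0 : Fin (d + 1))), if_pos rfl, one_mul]
    have : ∑ j ∈ Finset.univ.erase 0, (if j = 0 then (1 : ℝ) else -1) * (u j) ^ 2
        = ∑ j ∈ Finset.univ.erase 0, -((u j) ^ 2) := by
      apply Finset.sum_congr rfl
      intro j hj
      rw [if_neg (Finset.ne_of_mem_erase hj)]; ring
    rw [this, Finset.sum_neg_distrib]; ring
  have hquad : ∀ c : Fin l → ℝ,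
      ∑ k, μ k * (c k) ^ 2
        = ((T *ᵥ c) 0) ^ 2 - ∑ j ∈ Finset.univ.erase 0, ((T *ᵥ c) j) ^ 2 := by
    intro c
    have e1 : c ⬝ᵥ (Matrix.diagonal μ *ᵥ c) = ∑ k, μ k * (c k) ^ 2 := by
      unfold dotProduct
      apply Finset.sum_congr rfl
      intro k _
      rw [Matrix.mulVec_diagonal]
      ring
    have s1 : (Tᵀ * lorJ d * T) *ᵥ c = Tᵀ *ᵥ (lorJ d *ᵥ (T *ᵥ c)) := by
      rw [Matrix.mulVec_mulVec, Matrix.mulVec_mulVec, Matrix.mul_assoc]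
    have s2 : c ⬝ᵥ (Tᵀ *ᵥ (lorJ d *ᵥ (T *ᵥ c))) = (T *ᵥ c) ⬝ᵥ (lorJ d *ᵥ (T *ᵥ c)) := by
      rw [Matrix.dotProduct_mulVec, Matrix.vecMul_transpose]
    have s3 : (T *ᵥ c) ⬝ᵥ (lorJ d *ᵥ (T *ᵥ c))
        = ∑ j, (if j = 0 then (1 : ℝ) else -1) * ((T *ᵥ c) j) ^ 2 := by
      unfold dotProduct
      apply Finset.sum_congr rfl
      intro j _
      rw [show (lorJ d *ᵥ (T *ᵥ c)) j = (if j = 0 then (1 : ℝ) else -1) * (T *ᵥ c) j from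
        Matrix.mulVec_diagonal _ _ _]
      ring
    rw [← e1, ← hTJT, s1, s2, s3, e3]
  -- support sums
  have hsupp : ∀ (S : Finset (Fin l)) (c0 : {x // x ∈ S} → ℝ) (j : Fin (d + 1)),
      (T *ᵥ (fun k => if h : k ∈ S then c0 ⟨k, h⟩ else 0)) j
        = ∑ s ∈ S.attach, T j s.1 * c0 s := by
    intro S c0 j
    show ∑ k, T j k * (if h : k ∈ S then c0 ⟨k, h⟩ else 0) = _
    rw [← Finset.sum_subset (Finset.subset_univ S) (by
      intro k _ hk
      rw [dif_neg hk, mul_zero])]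
    rw [← Finset.sum_attach S (fun k => T j k * (if h : k ∈ S then c0 ⟨k, h⟩ else 0))]
    apply Finset.sum_congr rfl
    intro s _
    rw [dif_pos s.2]
  -- counting
  set P := Finset.univ.filter (fun k => 0 < μ k) with hPdef
  set N := Finset.univ.filter (fun k => μ k < 0) with hNdef
  have hPcard : P.card ≤ 1 := by
    by_contra hcon
    push_neg at hcon
    obtain ⟨c0, hc0ne, hc0⟩ := exists_ker_vec
      (Matrix.of fun (_ : Fin 1) (s : {x // x ∈ P}) => T 0 s.1)
      (by rw [Fintype.card_coe]; simpa using hcon)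
    set c : Fin l → ℝ := fun k => if h : k ∈ P then c0 ⟨k, h⟩ else 0 with hcdef
    have hu0 : (T *ᵥ c) 0 = 0 := by
      rw [hcdef, hsupp P c0 0]
      have := congrFun hc0 0
      simpa [Matrix.mulVec, dotProduct, Finset.univ_eq_attach] using this
    have hqle : ∑ k, μ k * (c k) ^ 2 ≤ 0 := by
      rw [hquad c, hu0]
      have : 0 ≤ ∑ j ∈ Finset.univ.erase 0, ((T *ᵥ c) j) ^ 2 :=
        Finset.sum_nonneg fun j _ => sq_nonneg _
      nlinarith
    have hqgt : 0 < ∑ k, μ k * (c k) ^ 2 := by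
      obtain ⟨s, hs⟩ := Function.ne_iff.mp hc0ne
      have := Finset.sum_lt_sum (f := fun k => (0 : ℝ)) (g := fun k => μ k * (c k) ^ 2)
        (s := Finset.univ) ?_ ?_
      · simpa using this
      · intro k _
        show (0 : ℝ) ≤ μ k * (c k) ^ 2
        by_cases hk : k ∈ P
        · have hμk : 0 < μ k := (Finset.mem_filter.mp hk).2
          exact mul_nonneg hμk.le (sq_nonneg _)
        · rw [hcdef]
          simp [hk]
      · refine ⟨s.1, Finset.mem_univ _, ?_⟩
        show (0 : ℝ) < μ s.1 * (c s.1) ^ 2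
        have hμk : 0 < μ s.1 := (Finset.mem_filter.mp s.2).2
        have hcs : c s.1 = c0 s := by
          rw [hcdef]
          simp only [dif_pos s.2]
        have hne : c s.1 ≠ 0 := by rw [hcs]; exact hs
        have hsq : (0:ℝ) < (c s.1) ^ 2 := by positivity
        exact mul_pos hμk hsq
    linarith
  have hNcard : N.card ≤ d := by
    by_contra hcon
    push_neg at hcon
    obtain ⟨c0, hc0ne, hc0⟩ := exists_ker_vec
      (Matrix.of fun (j : Fin d) (s : {x // x ∈ N}) => T j.succ s.1)
      (by rw [Fintype.card_coe]; simpa using hcon)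
    set c : Fin l → ℝ := fun k => if h : k ∈ N then c0 ⟨k, h⟩ else 0 with hcdef
    have huj : ∀ j ∈ Finset.univ.erase (0 : Fin (d + 1)), (T *ᵥ c) j = 0 := by
      intro j hj
      obtain ⟨j', hj'⟩ := Fin.exists_succ_eq.mpr (Finset.ne_of_mem_erase hj)
      rw [hcdef, hsupp N c0 j, ← hj']
      have := congrFun hc0 j'
      simpa [Matrix.mulVec, dotProduct, Finset.univ_eq_attach] using this
    have hqge : 0 ≤ ∑ k, μ k * (c k) ^ 2 := by
      rw [hquad c]
      have hz : ∑ j ∈ Finset.univ.erase (0 : Fin (d + 1)), ((T *ᵥ c) j) ^ 2 = 0 :=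
        Finset.sum_eq_zero fun j hj => by rw [huj j hj]; ring
      rw [hz, sub_zero]
      exact sq_nonneg _
    have hqlt : ∑ k, μ k * (c k) ^ 2 < 0 := by
      obtain ⟨s, hs⟩ := Function.ne_iff.mp hc0ne
      have := Finset.sum_lt_sum (f := fun k => μ k * (c k) ^ 2) (g := fun k => (0 : ℝ))
        (s := Finset.univ) ?_ ?_
      · simpa using this
      · intro k _
        show μ k * (c k) ^ 2 ≤ (0 : ℝ)
        by_cases hk : k ∈ N
        · have hμk : μ k < 0 := (Finset.mem_filter.mp hk).2
          nlinarith [sq_nonneg (c k)]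
        · rw [hcdef]
          simp [hk]
      · refine ⟨s.1, Finset.mem_univ _, ?_⟩
        show μ s.1 * (c s.1) ^ 2 < (0 : ℝ)
        have hμk : μ s.1 < 0 := (Finset.mem_filter.mp s.2).2
        have hcs : c s.1 = c0 s := by
          rw [hcdef]
          simp only [dif_pos s.2]
        have hne : c s.1 ≠ 0 := by rw [hcs]; exact hs
        have hpos : (0:ℝ) < (c s.1) ^ 2 := by positivity
        nlinarith
    linarith
  -- Rayleigh upper bound
  have hrup : ∀ k, r k ≤ lam0 := by
    intro k
    have hb : r k ≤ ∑ i, lam0 * (W i k) ^ 2 := by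
      apply Finset.sum_le_sum
      intro i _
      exact mul_le_mul_of_nonneg_right (hdesc ⟨0, by omega⟩ i (by simp [Fin.le_def])) (sq_nonneg _)
    rwa [← Finset.mul_sum, hcol k, mul_one] at hb
  -- Ky Fan type lower bound
  have hKF : ∀ S : Finset (Fin l), 1 ≤ S.card → S.card ≤ l →
      ∑ t ∈ Finset.range S.card, lam ⟨l - 1 - t, by omega⟩ ≤ ∑ k ∈ S, r k := by
    intro S hS1 hSl
    set cc : Fin l → ℝ := fun i => ∑ k ∈ S, (W i k) ^ 2 with hcc
    have hcc0 : ∀ i, 0 ≤ cc i := fun i => Finset.sum_nonneg fun k _ => sq_nonneg _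
    have hcc1 : ∀ i, cc i ≤ 1 := by
      intro i
      calc cc i ≤ ∑ k, (W i k) ^ 2 :=
            Finset.sum_le_sum_of_subset_of_nonneg (Finset.subset_univ S)
              (fun k _ _ => sq_nonneg _)
        _ = 1 := hrow i
    have hccs : ∑ i, cc i = (S.card : ℝ) := by
      rw [hcc, Finset.sum_comm, Finset.sum_congr rfl fun k (_ : k ∈ S) => hcol k]
      simp
    have hcl := c_lemma hl0 lam hdesc cc hcc0 hcc1 S.card hS1 hSl hccs
    refine le_trans hcl ?_
    have heq : ∑ i, lam i * cc i = ∑ k ∈ S, r k := by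
      rw [hcc]
      calc ∑ i, lam i * ∑ k ∈ S, (W i k) ^ 2
          = ∑ i, ∑ k ∈ S, lam i * (W i k) ^ 2 := by
            apply Finset.sum_congr rfl; intro i _; rw [Finset.mul_sum]
        _ = ∑ k ∈ S, ∑ i, lam i * (W i k) ^ 2 := Finset.sum_comm
        _ = ∑ k ∈ S, r k := rfl
    rw [heq]
  -- sorted enumeration of N
  set m := N.card with hm
  have hmd : m ≤ d := hNcard
  set e0 := N.orderIsoOfFin hm.symm with he0
  set f0 : Fin m → ℝ := fun t => μ (e0 t) with hf0
  set σ := Tuple.sort f0 with hσ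
  set e : ℕ → Fin l := fun t => if h : t < m then ((e0 (σ ⟨t, h⟩)) : Fin l) else ⟨0, hl0⟩ with he
  have heN : ∀ t, t < m → e t ∈ N := by
    intro t h
    rw [he]; simp only [dif_pos h]
    exact (e0 (σ ⟨t, h⟩)).2
  have hemono : ∀ s t, s ≤ t → t < m → μ (e s) ≤ μ (e t) := by
    intro s t hst ht
    have hs : s < m := by omega
    have hmon := Tuple.monotone_sort f0 (a := ⟨s, hs⟩) (b := ⟨t, ht⟩)
      (by rw [Fin.le_def]; exact hst)
    rw [he]
    simp only [dif_pos hs, dif_pos ht]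
    simpa [hf0] using hmon
  have heinj : ∀ s t, s < m → t < m → e s = e t → s = t := by
    intro s t hs ht heq
    rw [he] at heq; simp only [dif_pos hs, dif_pos ht] at heq
    have h1 := Subtype.coe_injective heq
    have h2 := e0.injective h1
    have h3 := σ.injective h2
    exact congrArg Fin.val h3
  have hNimg : N = (Finset.range m).image e := by
    symm
    apply Finset.eq_of_subset_of_card_le
    · intro k hk
      obtain ⟨t, ht, rfl⟩ := Finset.mem_image.mp hk
      exact heN t (Finset.mem_range.mp ht)
    · rw [Finset.card_image_of_injOn, Finset.card_range]
      intro x hx y hy hxy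
      exact heinj x y (Finset.mem_range.mp (Finset.mem_coe.mp hx))
        (Finset.mem_range.mp (Finset.mem_coe.mp hy)) hxy
  have hsumN : ∀ g : Fin l → ℝ, ∑ k ∈ N, g k = ∑ t ∈ Finset.range m, g (e t) := by
    intro g
    rw [hNimg]
    apply Finset.sum_image
    intro x hx y hy hxy
    exact heinj x y (Finset.mem_range.mp hx) (Finset.mem_range.mp hy) hxy
  -- Abel summation application
  set νf : ℕ → ℝ := fun t => if h : t < m then -μ (e t) else 0 with hνf
  set af : ℕ → ℝ := fun t => r (e t) - lam ⟨l - 1 - t, by omega⟩ with haf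
  have habel : 0 ≤ ∑ t ∈ Finset.range m, νf t * af t := by
    apply abel_ineq m νf af
    · intro i j hij hjm
      rw [hνf]
      by_cases hj : j < m
      · have hi : i < m := by omega
        simp only [dif_pos hj, dif_pos hi]
        have := hemono i j hij hj
        linarith
      · simp only [dif_neg hj]
        by_cases hi : i < m
        · simp only [dif_pos hi]
          have : μ (e i) < 0 := (Finset.mem_filter.mp (heN i hi)).2
          linarith
        · simp only [dif_neg hi]
          exact le_rfl
    · rw [hνf]; simp
    · intro m' hm'
      rcases Nat.eq_zero_or_pos m' with h0 | h1
      · simp [h0]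
      have hsub : ∑ t ∈ Finset.range m', af t
          = ∑ t ∈ Finset.range m', r (e t) - ∑ t ∈ Finset.range m', lam ⟨l - 1 - t, by omega⟩ := by
        rw [haf, Finset.sum_sub_distrib]
      set S' := (Finset.range m').image e with hS'
      have hcard' : S'.card = m' := by
        rw [hS', Finset.card_image_of_injOn, Finset.card_range]
        intro x hx y hy hxy
        exact heinj x y
          (lt_of_lt_of_le (Finset.mem_range.mp (Finset.mem_coe.mp hx)) hm')
          (lt_of_lt_of_le (Finset.mem_range.mp (Finset.mem_coe.mp hy)) hm') hxy
      have hKF' := hKF S' (by omega) (by omega)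
      rw [hcard'] at hKF'
      have himg : ∑ k ∈ S', r k = ∑ t ∈ Finset.range m', r (e t) := by
        rw [hS']
        apply Finset.sum_image
        intro x hx y hy hxy
        exact heinj x y (lt_of_lt_of_le (Finset.mem_range.mp hx) hm')
          (lt_of_lt_of_le (Finset.mem_range.mp hy) hm') hxy
      rw [himg] at hKF'
      rw [hsub]
      linarith
  have hNtrace : ∑ t ∈ Finset.range m, μ (e t) * r (e t)
      ≤ ∑ t ∈ Finset.range m, μ (e t) * lam ⟨l - 1 - t, by omega⟩ := by
    have expand : ∑ t ∈ Finset.range m, νf t * af t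
        = ∑ t ∈ Finset.range m, (μ (e t) * lam ⟨l - 1 - t, by omega⟩ - μ (e t) * r (e t)) := by
      apply Finset.sum_congr rfl
      intro t ht
      rw [hνf, haf]
      simp only [dif_pos (Finset.mem_range.mp ht)]
      ring
    rw [expand, Finset.sum_sub_distrib] at habel
    linarith
  have hneg2 : 2 * ∑ k ∈ N, μ k * r k
      ≤ ∑ k ∈ N, μ k ^ 2 + ∑ t ∈ Finset.range d, lam ⟨l - 1 - t, by omega⟩ ^ 2 := by
    rw [hsumN (fun k => μ k * r k), hsumN (fun k => μ k ^ 2)]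
    have hsq : ∑ t ∈ Finset.range m, lam ⟨l - 1 - t, by omega⟩ ^ 2
        ≤ ∑ t ∈ Finset.range d, lam ⟨l - 1 - t, by omega⟩ ^ 2 :=
      Finset.sum_le_sum_of_subset_of_nonneg (Finset.range_subset_range.mpr hmd)
        (fun _ _ _ => sq_nonneg _)
    have hstep : ∑ t ∈ Finset.range m, 2 * (μ (e t) * lam ⟨l - 1 - t, by omega⟩)
        ≤ ∑ t ∈ Finset.range m, (μ (e t) ^ 2 + lam ⟨l - 1 - t, by omega⟩ ^ 2) := by
      apply Finset.sum_le_sum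
      intro t _
      nlinarith [sq_nonneg (μ (e t) - lam ⟨l - 1 - t, by omega⟩)]
    rw [Finset.sum_add_distrib] at hstep
    rw [← Finset.mul_sum] at hstep
    linarith
  have hpos2 : 2 * ∑ k ∈ P, μ k * r k ≤ ∑ k ∈ P, μ k ^ 2 + lam0 ^ 2 := by
    have hstep : ∑ k ∈ P, 2 * (μ k * r k) ≤ ∑ k ∈ P, (μ k ^ 2 + lam0 ^ 2) := by
      apply Finset.sum_le_sum
      intro k hk
      have hμk : 0 < μ k := (Finset.mem_filter.mp hk).2
      have := hrup k
      nlinarith [sq_nonneg (μ k - lam0)]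
    rw [Finset.sum_add_distrib, Finset.sum_const, ← Finset.mul_sum] at hstep
    have hc1 : (P.card : ℝ) ≤ 1 := by exact_mod_cast hPcard
    have : (P.card : ℝ) * lam0 ^ 2 ≤ lam0 ^ 2 := by nlinarith [sq_nonneg lam0]
    rw [nsmul_eq_mul] at hstep
    linarith
  have hdisj : Disjoint P N := by
    rw [Finset.disjoint_left]
    intro k hkP hkN
    have hp1 : 0 < μ k := (Finset.mem_filter.mp hkP).2
    have hp2 : μ k < 0 := (Finset.mem_filter.mp hkN).2
    linarith
  have hsplit : ∑ k, μ k * r k = ∑ k ∈ P, μ k * r k + ∑ k ∈ N, μ k * r k := by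
    rw [← Finset.sum_union hdisj]
    symm
    apply Finset.sum_subset (Finset.subset_univ _)
    intro k _ hk
    have hp1 : ¬ 0 < μ k := fun h =>
      hk (Finset.mem_union_left _ (Finset.mem_filter.mpr ⟨Finset.mem_univ _, h⟩))
    have hp2 : ¬ μ k < 0 := fun h =>
      hk (Finset.mem_union_right _ (Finset.mem_filter.mpr ⟨Finset.mem_univ _, h⟩))
    have : μ k = 0 := le_antisymm (not_lt.mp hp1) (not_lt.mp hp2)
    rw [this, zero_mul]
  have hμsub : ∑ k ∈ P, μ k ^ 2 + ∑ k ∈ N, μ k ^ 2 ≤ ∑ k, μ k ^ 2 := by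
    rw [← Finset.sum_union hdisj]
    exact Finset.sum_le_sum_of_subset_of_nonneg (Finset.subset_univ _)
      fun k _ _ => sq_nonneg _
  rw [hexp]
  linarith
end LB

set_option maxHeartbeats 2000000 in
/-- the landmark matrix `X̂_L` built from the eigendecomposition of
`A_L = cosh(√κ D_L)` minimizes the Frobenius distance `‖A_L - X J Xᵀ‖_F`. -/
theorem stmt_2 {d l : ℕ} (hd : 1 ≤ d) (hl : d + 1 ≤ l)
    (D_L : Matrix (Fin l) (Fin l) ℝ) (hsym : D_Lᵀ = D_L)
    (hnonneg : ∀ i j, 0 ≤ D_L i j) (hdiag : ∀ i, D_L i i = 0)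
    (κ : ℝ) (hκ : 0 < κ)
    (A_L : Matrix (Fin l) (Fin l) ℝ)
    (hA : A_L = Matrix.of fun i j => Real.cosh (Real.sqrt κ * D_L i j))
    (Q : Matrix (Fin l) (Fin l) ℝ) (hQ : Qᵀ * Q = 1)
    (lam : Fin l → ℝ) (hdesc : ∀ i j : Fin l, i ≤ j → lam j ≤ lam i)
    (hdecomp : A_L = Q * Matrix.diagonal lam * Qᵀ)
    (hneg : lam ⟨l - d, by omega⟩ < 0) :
    0 < lam ⟨0, by omega⟩ ∧
    ∀ X : Matrix (Fin l) (Fin (d + 1)) ℝ,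
      frob (A_L - hatXL hl Q lam * lorJ d * (hatXL hl Q lam)ᵀ) ≤
        frob (A_L - X * lorJ d * Xᵀ) := by
  have hl0 : 0 < l := by omega
  have hQQ : Q * Qᵀ = 1 := mul_eq_one_comm.mp hQ
  -- trace identity
  have htr : ∑ i, lam i = (l : ℝ) := by
    have t1 : Matrix.trace A_L = (l : ℝ) := by
      rw [hA]
      have : ∀ i : Fin l, Real.cosh (Real.sqrt κ * D_L i i) = 1 := by
        intro i; rw [hdiag i, mul_zero, Real.cosh_zero]
      calc Matrix.trace (Matrix.of fun i j => Real.cosh (Real.sqrt κ * D_L i j))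
          = ∑ i : Fin l, Real.cosh (Real.sqrt κ * D_L i i) := rfl
        _ = ∑ _i : Fin l, (1 : ℝ) := Finset.sum_congr rfl fun i _ => this i
        _ = (l : ℝ) := by simp
    have t2 : Matrix.trace A_L = ∑ i, lam i := by
      rw [hdecomp, Matrix.trace_mul_cycle, hQ, Matrix.one_mul, Matrix.trace_diagonal]
    linarith
  have hlam0 : 0 < lam ⟨0, by omega⟩ := by
    by_contra hcon
    push_neg at hcon
    have hall : ∀ i : Fin l, lam i ≤ 0 :=
      fun i => le_trans (hdesc ⟨0, by omega⟩ i (by simp [Fin.le_def])) hcon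
    have hsum : ∑ i, lam i ≤ 0 := Finset.sum_nonpos fun i _ => hall i
    have : (0 : ℝ) < l := by exact_mod_cast hl0
    linarith
  refine ⟨hlam0, ?_⟩
  intro X
  set s : Fin (d + 1) → ℝ := fun j =>
    if (j : ℕ) = 0 then Real.sqrt (lam (colIdx hl j)) else Real.sqrt (-lam (colIdx hl j))
    with hs
  set E : Matrix (Fin l) (Fin (d + 1)) ℝ :=
    Matrix.of fun i j => if i = colIdx hl j then s j else 0 with hE
  have hXE : hatXL hl Q lam = Q * E := by
    ext i j
    rw [Matrix.mul_apply, Finset.sum_eq_single (colIdx hl j)]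
    · show (if (j : ℕ) = 0 then Real.sqrt (lam (colIdx hl j))
        else Real.sqrt (-lam (colIdx hl j))) * Q i (colIdx hl j)
        = Q i (colIdx hl j) * (if colIdx hl j = colIdx hl j then s j else 0)
      rw [if_pos rfl, hs]
      ring
    · intro b _ hb
      show Q i b * (if b = colIdx hl j then s j else 0) = 0
      rw [if_neg hb, mul_zero]
    · intro h; exact absurd (Finset.mem_univ _) h
  have hcv : ∀ j : Fin (d + 1), ((colIdx hl j : Fin l) : ℕ)
      = if (j : ℕ) = 0 then 0 else l - d - 1 + j := by
    intro j
    by_cases h : (j : ℕ) = 0 <;> simp [colIdx, h]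
  have hneg' : ∀ j : Fin (d + 1), (j : ℕ) ≠ 0 → lam (colIdx hl j) < 0 := by
    intro j hj
    refine lt_of_le_of_lt (hdesc ⟨l - d, by omega⟩ (colIdx hl j) ?_) hneg
    rw [Fin.le_def, hcv j, if_neg hj]
    have := j.isLt
    have : 1 ≤ (j : ℕ) := by omega
    simp only [Fin.val_mk]
    omega
  have hEntry : ∀ a b, (E * lorJ d * Eᵀ) a b
      = ∑ j, (if a = colIdx hl j then s j else 0) * (if j = 0 then (1 : ℝ) else -1)
          * (if b = colIdx hl j then s j else 0) := by
    intro a b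
    rw [Matrix.mul_apply]
    apply Finset.sum_congr rfl
    intro j _
    rw [Matrix.transpose_apply]
    show (E * lorJ d) a j * E b j = _
    rw [show lorJ d = Matrix.diagonal (fun i : Fin (d+1) => if i = 0 then (1:ℝ) else -1) from rfl,
      Matrix.mul_diagonal]
    rfl
  set g : Fin l → ℝ := fun i => if (i : ℕ) = 0 ∨ l - d ≤ (i : ℕ) then lam i else 0 with hg
  have hEJE : E * lorJ d * Eᵀ = Matrix.diagonal g := by
    ext a b
    rw [hEntry]
    by_cases hab : a = b
    · subst hab
      rw [Matrix.diagonal_apply_eq]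
      simp only [hg]
      by_cases h0 : (a : ℕ) = 0
      · have hc0 : colIdx hl (0 : Fin (d + 1)) = a := by
          apply Fin.ext; rw [hcv]; simp [h0]
        have ha0 : (⟨0, by omega⟩ : Fin l) = a := Fin.ext (by simpa using h0.symm)
        have hpos : (0:ℝ) ≤ lam a := le_of_lt (ha0 ▸ hlam0)
        have hs0 : s 0 = Real.sqrt (lam a) := by
          rw [hs]
          simp only
          rw [if_pos (by simp : (((0 : Fin (d+1))) : ℕ) = 0), hc0]
        rw [Finset.sum_eq_single (0 : Fin (d + 1))]
        · rw [if_pos hc0.symm, if_pos rfl, hs0, if_pos (Or.inl h0), mul_one]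
          exact Real.mul_self_sqrt hpos
        · intro j _ hj
          have : a ≠ colIdx hl j := by
            intro hcontra
            have := hcv j
            rw [← hcontra] at this
            have hj' : (j : ℕ) ≠ 0 := fun h => hj (Fin.ext h)
            rw [if_neg hj'] at this
            omega
          rw [if_neg this, zero_mul, zero_mul]
        · intro h; exact absurd (Finset.mem_univ _) h
      · by_cases h1 : l - d ≤ (a : ℕ)
        · have hjlt : (a : ℕ) - (l - d - 1) < d + 1 := by have := a.isLt; omega
          set j0 : Fin (d + 1) := ⟨(a : ℕ) - (l - d - 1), hjlt⟩ with hj0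
          have hj0ne : (j0 : ℕ) ≠ 0 := by rw [hj0]; simp; omega
          have hcj0 : colIdx hl j0 = a := by
            apply Fin.ext; rw [hcv, if_neg hj0ne]; simp [hj0]; omega
          have hsj0 : s j0 = Real.sqrt (-lam a) := by
            rw [hs]
            simp only
            rw [if_neg hj0ne, hcj0]
          rw [Finset.sum_eq_single j0]
          · rw [if_pos hcj0.symm,
              if_neg (show j0 ≠ 0 from fun h => hj0ne (by rw [h]; rfl)), hsj0,
              if_pos (Or.inr h1)]
            have hlt : lam a < 0 := hcj0 ▸ hneg' j0 hj0ne
            have h2 : Real.sqrt (-lam a) * Real.sqrt (-lam a) = -lam a :=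
              Real.mul_self_sqrt (by linarith)
            rw [show Real.sqrt (-lam a) * -1 * Real.sqrt (-lam a)
              = -(Real.sqrt (-lam a) * Real.sqrt (-lam a)) from by ring, h2, neg_neg]
          · intro j _ hj
            by_cases hja : a = colIdx hl j
            · exfalso
              apply hj
              apply Fin.ext
              have hv := hcv j
              rw [← hja] at hv
              by_cases hjz : (j : ℕ) = 0
              · rw [if_pos hjz] at hv; omega
              · rw [if_neg hjz] at hv
                rw [hj0]
                simp only [Fin.val_mk]
                omega
            · rw [if_neg hja, zero_mul, zero_mul]
          · intro h; exact absurd (Finset.mem_univ _) h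
        · rw [if_neg (by push_neg; exact ⟨h0, by omega⟩)]
          apply Finset.sum_eq_zero
          intro j _
          have : a ≠ colIdx hl j := by
            intro hcontra
            have hv := hcv j
            rw [← hcontra] at hv
            by_cases hjz : (j : ℕ) = 0
            · rw [if_pos hjz] at hv; exact h0 hv
            · rw [if_neg hjz] at hv
              have := j.isLt
              omega
          rw [if_neg this, zero_mul, zero_mul]
    · rw [Matrix.diagonal_apply_ne _ hab]
      apply Finset.sum_eq_zero
      intro j _
      by_cases ha : a = colIdx hl j
      · have hb : b ≠ colIdx hl j := fun h => hab (by rw [ha, h])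
        rw [if_neg hb, mul_zero]
      · rw [if_neg ha, zero_mul, zero_mul]
  -- assemble
  have hBL : A_L - hatXL hl Q lam * lorJ d * (hatXL hl Q lam)ᵀ
      = Q * Matrix.diagonal (fun i : Fin l =>
          if (i : ℕ) = 0 ∨ l - d ≤ (i : ℕ) then 0 else lam i) * Qᵀ := by
    rw [hXE, hdecomp, Matrix.transpose_mul]
    have step : Q * E * lorJ d * (Eᵀ * Qᵀ) = Q * (E * lorJ d * Eᵀ) * Qᵀ := by
      simp only [Matrix.mul_assoc]
    rw [step, hEJE]
    rw [show Q * Matrix.diagonal lam * Qᵀ - Q * Matrix.diagonal g * Qᵀ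
      = Q * (Matrix.diagonal lam - Matrix.diagonal g) * Qᵀ from by
        rw [Matrix.mul_sub, Matrix.sub_mul]]
    rw [Matrix.diagonal_sub]
    have hdd : (fun i => lam i - g i)
        = (fun i : Fin l => if (i : ℕ) = 0 ∨ l - d ≤ (i : ℕ) then 0 else lam i) := by
      funext i
      simp only [hg]
      split_ifs with h
      · ring
      · ring
    rw [hdd]
  have hval : frobSq (A_L - hatXL hl Q lam * lorJ d * (hatXL hl Q lam)ᵀ)
      = ∑ i, lam i ^ 2 - lam ⟨0, by omega⟩ ^ 2
        - ∑ t ∈ Finset.range d, lam ⟨l - 1 - t, by omega⟩ ^ 2 := by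
    rw [hBL, frobSq_conj _ _ hQ, frobSq_diagonal]
    have e1 : ∀ i : Fin l, (if (i : ℕ) = 0 ∨ l - d ≤ (i : ℕ) then (0:ℝ) else lam i) ^ 2
        = lam i ^ 2 - (if (i : ℕ) = 0 ∨ l - d ≤ (i : ℕ) then lam i ^ 2 else 0) := by
      intro i
      by_cases h : (i : ℕ) = 0 ∨ l - d ≤ (i : ℕ)
      · rw [if_pos h, if_pos h]; ring
      · rw [if_neg h, if_neg h]; ring
    rw [Finset.sum_congr rfl fun i _ => e1 i, Finset.sum_sub_distrib,
      ← Finset.sum_filter (fun i : Fin l => (i : ℕ) = 0 ∨ l - d ≤ (i : ℕ)) (fun i => lam i ^ 2)]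
    have hsplitf : Finset.univ.filter (fun i : Fin l => (i : ℕ) = 0 ∨ l - d ≤ (i : ℕ))
        = Finset.univ.filter (fun i : Fin l => (i : ℕ) = 0)
          ∪ Finset.univ.filter (fun i : Fin l => l - d ≤ (i : ℕ)) := Finset.filter_or _ _ _
    have hdisj2 : Disjoint (Finset.univ.filter (fun i : Fin l => (i : ℕ) = 0))
        (Finset.univ.filter (fun i : Fin l => l - d ≤ (i : ℕ))) := by
      rw [Finset.disjoint_left]
      intro i hi1 hi2
      have e1' := (Finset.mem_filter.mp hi1).2
      have e2' := (Finset.mem_filter.mp hi2).2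
      omega
    have hsingle : Finset.univ.filter (fun i : Fin l => (i : ℕ) = 0)
        = {(⟨0, by omega⟩ : Fin l)} := by
      ext i
      simp only [Finset.mem_filter, Finset.mem_univ, true_and, Finset.mem_singleton]
      constructor
      · intro h; exact Fin.ext h
      · intro h; rw [h]
    rw [hsplitf, Finset.sum_union hdisj2, hsingle, Finset.sum_singleton,
      ← sum_last hl0 (fun i => lam i ^ 2) d (by omega)]
    ring
  rw [show frob (A_L - hatXL hl Q lam * lorJ d * (hatXL hl Q lam)ᵀ)
    = Real.sqrt (frobSq (A_L - hatXL hl Q lam * lorJ d * (hatXL hl Q lam)ᵀ)) from rfl,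
    show frob (A_L - X * lorJ d * Xᵀ) = Real.sqrt (frobSq (A_L - X * lorJ d * Xᵀ)) from rfl]
  apply Real.sqrt_le_sqrt
  rw [hval]
  have hAX : A_L - X * lorJ d * Xᵀ
      = Q * (Matrix.diagonal lam - (Qᵀ * X) * lorJ d * (Qᵀ * X)ᵀ) * Qᵀ := by
    rw [Matrix.mul_sub, Matrix.sub_mul, hdecomp]
    congr 1
    rw [Matrix.transpose_mul, Matrix.transpose_transpose]
    simp only [← Matrix.mul_assoc]
    rw [hQQ, Matrix.one_mul]
    rw [Matrix.mul_assoc (X * lorJ d * Xᵀ) Q Qᵀ, hQQ, Matrix.mul_one]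
  rw [hAX, frobSq_conj _ _ hQ]
  exact lower_bound hd hl lam hdesc (Qᵀ * X)
end

section
/- Let l ≥ d+1, m ≥ 1, let A_L ∈ ℝ^{l×l} be symmetric with all entries strictly positive, and let A_N ∈ ℝ^{m×l} have all entries strictly positive. Let λ₁ be the largest eigenvalue of A_L. Then λ₁ > 0, and there exists a unit eigenvector q₁ of A_L for λ₁ with all coordinates strictly positive; for any such choice of q₁, and for any eigendecomposition A_L = Q diag(λ₁, …, λ_l) Q^⊤ with first column q₁, descending eigenvalues, and λ_{l−d+1} < 0, the first column √λ₁ q₁ of X̂_L (the matrix with columns √λ₁ q₁, √(−λ_{l−d+1}) q_{l−d+1}, …, √(−λ_l) q_l) and the first column A_N q₁/√λ₁ of X̂_N := A_N X̂_L diag(1/λ₁, −1/λ_{l−d+1}, …, −1/λ_l) are both entrywise strictly positive; equivalently, all rows of X̂_L and X̂_N lie in the positive Lorentz half-space {x ∈ ℝ^{d+1} : x₁ > 0}. -/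
open Matrix Finset

lemma dot_mulVec_eq {l : ℕ} (A : Matrix (Fin l) (Fin l) ℝ) (x y : Fin l → ℝ) :
    x ⬝ᵥ A.mulVec y = ∑ i, ∑ j, x i * (A i j * y j) := by
  simp [dotProduct, Matrix.mulVec, Finset.mul_sum]

lemma psd_aux {l : ℕ} (A : Matrix (Fin l) (Fin l) ℝ) (hA : A.IsHermitian) (μ : ℝ)
    (hμmax : ∀ c : ℝ, (∃ v : Fin l → ℝ, v ≠ 0 ∧ A.mulVec v = c • v) → c ≤ μ) :
    (μ • (1 : Matrix (Fin l) (Fin l) ℝ) - A).PosSemidef := by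
  have hM : (μ • (1 : Matrix (Fin l) (Fin l) ℝ) - A).IsHermitian := by
    unfold Matrix.IsHermitian
    rw [Matrix.conjTranspose_sub, Matrix.conjTranspose_smul, Matrix.conjTranspose_one, hA.eq]
    simp
  apply hM.posSemidef_iff_eigenvalues_nonneg.mpr
  simp only [Pi.le_def, Pi.zero_apply]
  intro i
  set ν := hM.eigenvalues i with hν
  have hv := hM.mulVec_eigenvectorBasis i
  have hvne : (⇑(hM.eigenvectorBasis i) : Fin l → ℝ) ≠ 0 := by
    have h := hM.eigenvectorBasis.orthonormal.ne_zero i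
    intro hcontra
    exact h (by ext j; exact congrFun hcontra j)
  have hAv : A.mulVec ⇑(hM.eigenvectorBasis i) = (μ - ν) • ⇑(hM.eigenvectorBasis i) := by
    funext j
    have h1 := congrFun hv j
    simp only [Matrix.sub_mulVec, Matrix.smul_mulVec, Matrix.one_mulVec,
      Pi.sub_apply, Pi.smul_apply, smul_eq_mul, sub_smul] at h1 ⊢
    linarith
  have := hμmax (μ - ν) ⟨_, hvne, hAv⟩
  linarith

lemma rayleigh_le {l : ℕ} (A : Matrix (Fin l) (Fin l) ℝ) (hA : A.IsHermitian) (μ : ℝ)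
    (hμmax : ∀ c : ℝ, (∃ v : Fin l → ℝ, v ≠ 0 ∧ A.mulVec v = c • v) → c ≤ μ)
    (x : Fin l → ℝ) : x ⬝ᵥ A.mulVec x ≤ μ * (x ⬝ᵥ x) := by
  have h0 := (psd_aux A hA μ hμmax).dotProduct_mulVec_nonneg x
  simp only [star_trivial, RCLike.re_to_real] at h0
  have hexp : x ⬝ᵥ (μ • (1 : Matrix (Fin l) (Fin l) ℝ) - A) *ᵥ x
      = μ * (x ⬝ᵥ x) - x ⬝ᵥ A *ᵥ x := by
    rw [Matrix.sub_mulVec, dotProduct_sub, Matrix.smul_mulVec, Matrix.one_mulVec,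
      dotProduct_smul, smul_eq_mul]
  rw [hexp] at h0
  linarith

lemma perron {l : ℕ} (A_L : Matrix (Fin l) (Fin l) ℝ) (hA : A_L.IsHermitian)
    (hALpos : ∀ i j, 0 < A_L i j) (μ : ℝ)
    (hμeig : ∃ v : Fin l → ℝ, v ≠ 0 ∧ A_L.mulVec v = μ • v)
    (hμmax : ∀ c : ℝ, (∃ v : Fin l → ℝ, v ≠ 0 ∧ A_L.mulVec v = c • v) → c ≤ μ) :
    0 < μ ∧
    (∃ q₁ : Fin l → ℝ, (∑ i, q₁ i ^ 2 = 1) ∧ A_L.mulVec q₁ = μ • q₁ ∧ ∀ i, 0 < q₁ i) := by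
  obtain ⟨v, hv0, hveig⟩ := hμeig
  obtain ⟨i0, hi0⟩ := Function.ne_iff.mp hv0
  have hvsq : 0 < ∑ i, v i ^ 2 :=
    Finset.sum_pos' (fun i _ => sq_nonneg _) ⟨i0, Finset.mem_univ _, pow_pos (abs_pos.mpr hi0) 2 |>.trans_eq (by rw [← abs_pow, abs_of_nonneg (sq_nonneg _)])⟩
  set c := Real.sqrt (∑ i, v i ^ 2) with hcdef
  have hc : 0 < c := Real.sqrt_pos.mpr hvsq
  set u : Fin l → ℝ := c⁻¹ • v with hudef
  have hu1 : ∑ i, u i ^ 2 = 1 := by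
    simp only [hudef, Pi.smul_apply, smul_eq_mul, mul_pow, ← Finset.mul_sum]
    rw [hcdef, ← Real.sqrt_inv, Real.sq_sqrt (by positivity), inv_mul_cancel₀ hvsq.ne']
  have hueig : A_L.mulVec u = μ • u := by
    rw [hudef, Matrix.mulVec_smul, hveig, smul_comm]
  have hu0 : u i0 ≠ 0 := by
    simp only [hudef, Pi.smul_apply, smul_eq_mul]
    exact mul_ne_zero (by positivity) hi0
  set w : Fin l → ℝ := fun i => |u i| with hwdef
  have hwnn : ∀ i, 0 ≤ w i := fun i => abs_nonneg _
  have hw1 : ∑ i, w i ^ 2 = 1 := by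
    simpa only [hwdef, sq_abs] using hu1
  have hww : w ⬝ᵥ w = 1 := by
    simpa [dotProduct, ← sq] using hw1
  -- μ = u ⬝ᵥ A u
  have hμeq : u ⬝ᵥ A_L.mulVec u = μ := by
    rw [hueig, dotProduct_smul, smul_eq_mul]
    have : u ⬝ᵥ u = 1 := by simpa [dotProduct, ← sq] using hu1
    rw [this, mul_one]
  have hle : u ⬝ᵥ A_L.mulVec u ≤ w ⬝ᵥ A_L.mulVec w := by
    rw [dot_mulVec_eq, dot_mulVec_eq]
    apply Finset.sum_le_sum
    intro i _
    apply Finset.sum_le_sum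
    intro j _
    calc u i * (A_L i j * u j) ≤ |u i * (A_L i j * u j)| := le_abs_self _
      _ = w i * (A_L i j * w j) := by
          rw [abs_mul, abs_mul, abs_of_pos (hALpos i j)]
  have hray := rayleigh_le A_L hA μ hμmax w
  rw [hww, mul_one] at hray
  have hwApos : 0 < w ⬝ᵥ A_L.mulVec w := by
    rw [dot_mulVec_eq]
    apply Finset.sum_pos' (fun i _ => Finset.sum_nonneg fun j _ =>
      mul_nonneg (hwnn i) (mul_nonneg (hALpos i j).le (hwnn j)))
    refine ⟨i0, Finset.mem_univ _, ?_⟩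
    apply Finset.sum_pos' (fun j _ =>
      mul_nonneg (hwnn i0) (mul_nonneg (hALpos i0 j).le (hwnn j)))
    refine ⟨i0, Finset.mem_univ _, ?_⟩
    have h3 : 0 < w i0 := abs_pos.mpr hu0
    exact mul_pos h3 (mul_pos (hALpos i0 i0) h3)
  have hμpos : 0 < μ := lt_of_lt_of_le hwApos hray
  have hwA : w ⬝ᵥ A_L.mulVec w = μ := le_antisymm hray (hμeq ▸ hle)
  -- w is an eigenvector
  have hMw : (μ • (1 : Matrix (Fin l) (Fin l) ℝ) - A_L) *ᵥ w = 0 := by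
    rw [← (psd_aux A_L hA μ hμmax).dotProduct_mulVec_zero_iff w]
    rw [star_trivial, Matrix.sub_mulVec, dotProduct_sub, Matrix.smul_mulVec,
      Matrix.one_mulVec, dotProduct_smul, smul_eq_mul, hww, hwA]
    ring
  have hweig : A_L.mulVec w = μ • w := by
    have := hMw
    rw [Matrix.sub_mulVec, Matrix.smul_mulVec, Matrix.one_mulVec, sub_eq_zero] at this
    exact this.symm
  have hwpos : ∀ i, 0 < w i := by
    intro i
    have h1 : (A_L.mulVec w) i = μ * w i := by rw [hweig]; simp
    have h2 : 0 < (A_L.mulVec w) i := by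
      rw [Matrix.mulVec]
      apply Finset.sum_pos' (fun j _ => mul_nonneg (hALpos i j).le (hwnn j))
      exact ⟨i0, Finset.mem_univ _, mul_pos (hALpos i i0) (abs_pos.mpr hu0)⟩
    nlinarith [hwnn i]
  exact ⟨hμpos, w, hw1, hweig, hwpos⟩

/-- for entrywise positive `A_L`, `A_N`, the largest eigenvalue of
`A_L` is positive and has a positive unit eigenvector; for any such choice the
first columns of `X̂_L` and `X̂_N` are entrywise strictly positive. -/
theorem stmt_4 {d l m : ℕ} (hd : 1 ≤ d) (hl : d + 1 ≤ l) (hm : 1 ≤ m)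
    (A_L : Matrix (Fin l) (Fin l) ℝ) (hsym : A_Lᵀ = A_L)
    (hALpos : ∀ i j, 0 < A_L i j)
    (A_N : Matrix (Fin m) (Fin l) ℝ) (hANpos : ∀ i j, 0 < A_N i j)
    (μ : ℝ)
    (hμeig : ∃ v : Fin l → ℝ, v ≠ 0 ∧ A_L.mulVec v = μ • v)
    (hμmax : ∀ c : ℝ, (∃ v : Fin l → ℝ, v ≠ 0 ∧ A_L.mulVec v = c • v) → c ≤ μ) :
    0 < μ ∧
    (∃ q₁ : Fin l → ℝ, (∑ i, q₁ i ^ 2 = 1) ∧ A_L.mulVec q₁ = μ • q₁ ∧ ∀ i, 0 < q₁ i) ∧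
    ∀ q₁ : Fin l → ℝ, (∑ i, q₁ i ^ 2 = 1) → A_L.mulVec q₁ = μ • q₁ → (∀ i, 0 < q₁ i) →
      ∀ (Q : Matrix (Fin l) (Fin l) ℝ) (lam : Fin l → ℝ),
        Qᵀ * Q = 1 → (∀ i j : Fin l, i ≤ j → lam j ≤ lam i) →
        A_L = Q * Matrix.diagonal lam * Qᵀ →
        (∀ i, Q i ⟨0, by omega⟩ = q₁ i) →
        lam ⟨l - d, by omega⟩ < 0 →
        (∀ i, 0 < hatXL hl Q lam i 0) ∧ (∀ i, 0 < hatXN hl A_N Q lam i 0) := by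
  have hA : A_L.IsHermitian := by
    unfold Matrix.IsHermitian
    ext i j
    rw [Matrix.conjTranspose_apply, star_trivial, show A_L j i = A_Lᵀ i j from rfl, hsym]
  obtain ⟨hμpos, hex⟩ := perron A_L hA hALpos μ hμeig hμmax
  refine ⟨hμpos, hex, ?_⟩
  intro q₁ hq1unit hq1eig hq1pos Q lam hQorth hdec hdecomp hQcol hneg
  have hlpos : 0 < l := by omega
  set i0 : Fin l := ⟨0, by omega⟩ with hi0def
  have hQe : Q *ᵥ Pi.single i0 1 = q₁ := by
    funext i
    rw [Matrix.mulVec_single]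
    simpa using hQcol i
  have hQTq : Qᵀ *ᵥ q₁ = Pi.single i0 1 := by
    rw [← hQe, Matrix.mulVec_mulVec, hQorth, Matrix.one_mulVec]
  have hAq : A_L *ᵥ q₁ = lam i0 • q₁ := by
    rw [hdecomp, ← Matrix.mulVec_mulVec, ← Matrix.mulVec_mulVec, hQTq,
      Matrix.diagonal_mulVec_single, mul_one, ← hQe]
    funext i
    rw [Matrix.mulVec_single, Matrix.mulVec_single_one]
    simp only [Pi.smul_apply, MulOpposite.smul_eq_mul_unop, MulOpposite.unop_op, smul_eq_mul,
      Matrix.col_apply]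
    ring
  have hlam0 : lam i0 = μ := by
    have h1 := congrFun (hAq.symm.trans hq1eig) i0
    simp only [Pi.smul_apply, smul_eq_mul] at h1
    exact mul_right_cancel₀ (hq1pos i0).ne' h1
  have hcol0 : colIdx hl (0 : Fin (d + 1)) = i0 := by
    simp [colIdx, hi0def]
  have hXL : ∀ i, 0 < hatXL hl Q lam i 0 := by
    intro i
    have : hatXL hl Q lam i 0 = Real.sqrt (lam i0) * Q i i0 := by
      simp [hatXL, hcol0]
    rw [this, hlam0]
    rw [hQcol i]
    exact mul_pos (Real.sqrt_pos.mpr hμpos) (hq1pos i)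
  refine ⟨hXL, ?_⟩
  intro i
  have hD0 : hatXN hl A_N Q lam i 0
      = (A_N * hatXL hl Q lam) i 0 * (1 / lam i0) := by
    rw [hatXN, hatD, Matrix.mul_diagonal]
    simp [hcol0]
  rw [hD0]
  apply mul_pos
  · haveI : Nonempty (Fin l) := ⟨i0⟩
    rw [Matrix.mul_apply]
    exact Finset.sum_pos (fun j _ => mul_pos (hANpos i j) (hXL j)) Finset.univ_nonempty
  · rw [hlam0]
    positivity
end

section
/- Let l ≥ d+1 and let λ₁ ≥ λ₂ ≥ ⋯ ≥ λ_l be real numbers with Λ := diag(λ₁, …, λ_l). Then for every Y ∈ ℝ^{l×(d+1)}, ‖Y J Y^⊤ − Λ‖_F² ≥ Σ_{i=2}^{l−d} λ_i². -/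
open Matrix Finset

open Module Submodule

set_option linter.unusedSectionVars false

variable {E : Type*} [NormedAddCommGroup E] [InnerProductSpace ℝ E] [FiniteDimensional ℝ E]

local notation "⟪" x ", " y "⟫" => @inner ℝ _ _ x y

lemma finrank_span_range_le' {r : ℕ} (v : Fin r → E) :
    finrank ℝ (span ℝ (Set.range v)) ≤ r := by
  classical
  refine (finrank_span_le_card _).trans ?_
  rw [Set.toFinset_range]
  exact (Finset.card_image_le).trans (by simp)

lemma finrank_inf_ge (U V : Submodule ℝ E) :
    finrank ℝ U + finrank ℝ V - finrank ℝ E ≤ finrank ℝ (U ⊓ V : Submodule ℝ E) := by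
  have h := Submodule.finrank_sup_add_finrank_inf_eq U V
  have h2 : finrank ℝ (U ⊔ V : Submodule ℝ E) ≤ finrank ℝ E := Submodule.finrank_le _
  omega

/-- Chain lemma. -/
lemma exists_orthonormal_chain :
    ∀ (r : ℕ) (U : Fin r → Submodule ℝ E), (∀ j : Fin r, (j : ℕ) + 1 ≤ finrank ℝ (U j)) →
      ∃ v : Fin r → E, Orthonormal ℝ v ∧ ∀ j, v j ∈ U j := by
  intro r
  induction r with
  | zero =>
    intro U _
    refine ⟨fun j => 0, ?_, fun j => j.elim0⟩
    rw [orthonormal_iff_ite]; intro i; exact i.elim0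
  | succ r ih =>
    intro U hU
    obtain ⟨v, hv, hvU⟩ := ih (fun j => U j.castSucc) (fun j => by simpa using hU j.castSucc)
    set W := span ℝ (Set.range v) with hW
    have hWle : finrank ℝ W ≤ r := finrank_span_range_le' v
    have h1 : 1 ≤ finrank ℝ (U (Fin.last r) ⊓ Wᗮ : Submodule ℝ E) := by
      have hA := finrank_inf_ge (U (Fin.last r)) Wᗮ
      have horth : finrank ℝ W + finrank ℝ Wᗮ = finrank ℝ E :=
        Submodule.finrank_add_finrank_orthogonal W
      have hB := hU (Fin.last r)
      have hC : finrank ℝ (U (Fin.last r)) ≤ finrank ℝ E := Submodule.finrank_le _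
      simp only [Fin.val_last] at hB
      omega
    obtain ⟨x, hx, hx0⟩ : ∃ x, x ∈ U (Fin.last r) ⊓ Wᗮ ∧ x ≠ 0 := by
      apply Submodule.exists_mem_ne_zero_of_ne_bot
      intro h; rw [h] at h1; simp at h1
    have hxn : ‖x‖ ≠ 0 := norm_ne_zero_iff.mpr hx0
    set u := (‖x‖⁻¹ : ℝ) • x with hu
    have hu_norm : ‖u‖ = 1 := by
      rw [hu, norm_smul]; simp [hxn, abs_of_nonneg (norm_nonneg x)]
    have huU : u ∈ U (Fin.last r) := Submodule.smul_mem _ _ hx.1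
    have huW : u ∈ Wᗮ := Submodule.smul_mem _ _ hx.2
    have hinner : ∀ j, ⟪v j, u⟫ = 0 := fun j =>
      huW (v j) (Submodule.subset_span (Set.mem_range_self j))
    refine ⟨Fin.snoc v u, ?_, ?_⟩
    · rw [orthonormal_iff_ite]
      intro i j
      refine Fin.lastCases ?_ ?_ i
      · refine Fin.lastCases ?_ ?_ j
        · simp [Fin.snoc_last, real_inner_self_eq_norm_sq, hu_norm]
        · intro j
          have h := hinner j
          rw [real_inner_comm] at h
          simp [Fin.snoc_last, Fin.snoc_castSucc, h, (Fin.castSucc_lt_last j).ne']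
      · intro i
        refine Fin.lastCases ?_ ?_ j
        · simp [Fin.snoc_last, Fin.snoc_castSucc, hinner i, (Fin.castSucc_lt_last i).ne]
        · intro j
          have h := orthonormal_iff_ite.mp hv i j
          simpa [Fin.snoc_castSucc, Fin.castSucc_inj] using h
    · intro j
      refine Fin.lastCases ?_ ?_ j
      · simpa [Fin.snoc_last] using huU
      · intro j; simpa [Fin.snoc_castSucc] using hvU j

/-- The submodule of vectors supported on a set `A` of coordinates. -/
def coordSub (n : ℕ) (A : Set (Fin n)) : Submodule ℝ (EuclideanSpace ℝ (Fin n)) where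
  carrier := {v | ∀ t, t ∉ A → v t = 0}
  add_mem' := by intro a b ha hb t ht; simp [ha t ht, hb t ht]
  zero_mem' := by intro t ht; rfl
  smul_mem' := by intro c a ha t ht; simp [ha t ht]

lemma card_le_finrank_coordSub {n : ℕ} (A : Finset (Fin n)) :
    A.card ≤ finrank ℝ (coordSub n (A : Set (Fin n))) := by
  classical
  have hon : Orthonormal ℝ (fun t : A => (EuclideanSpace.single (t : Fin n) (1:ℝ))) :=
    (EuclideanSpace.orthonormal_single (𝕜 := ℝ) (ι := Fin n)).comp _ Subtype.val_injective
  have hli := hon.linearIndependent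
  have hspan : span ℝ (Set.range fun t : A => EuclideanSpace.single (t : Fin n) (1:ℝ))
      ≤ coordSub n (A : Set (Fin n)) := by
    rw [span_le]
    rintro _ ⟨t, rfl⟩ s hs
    show EuclideanSpace.single (t : Fin n) (1:ℝ) s = 0
    rw [EuclideanSpace.single_apply]
    simp only [ite_eq_right_iff]
    intro h; exact absurd (h ▸ t.2) hs
  calc A.card = Fintype.card A := (Fintype.card_coe A).symm
    _ = finrank ℝ (span ℝ (Set.range fun t : A => EuclideanSpace.single (t : Fin n) (1:ℝ))) :=
        (finrank_span_eq_card hli).symm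
    _ ≤ _ := Submodule.finrank_mono hspan

lemma orthogonal_of_disjoint_support {n : ℕ} {A B : Set (Fin n)} (hAB : ∀ t, t ∈ A → t ∉ B)
    {x y : EuclideanSpace ℝ (Fin n)} (hx : x ∈ coordSub n A) (hy : y ∈ coordSub n B) :
    ⟪x, y⟫ = 0 := by
  rw [PiLp.inner_apply]
  refine Finset.sum_eq_zero fun t _ => ?_
  by_cases ht : t ∈ A
  · rw [hy t (hAB t ht)]; simp
  · rw [hx t ht]; simp

lemma quad_sum_le_frobSq {n r : ℕ} {v : Fin r → EuclideanSpace ℝ (Fin n)}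
    (hv : Orthonormal ℝ v) (A : Matrix (Fin n) (Fin n) ℝ) :
    ∑ j : Fin r, (⟪v j, (WithLp.toLp 2 (A.mulVec (v j)) : EuclideanSpace ℝ (Fin n))⟫) ^ 2 ≤ frobSq A := by
  set R : Fin n → EuclideanSpace ℝ (Fin n) := fun t => WithLp.toLp 2 (fun s => A t s) with hR
  have key : ∀ (x : EuclideanSpace ℝ (Fin n)), ⟪x, x⟫ = ∑ t, (x t) ^ 2 := by
    intro x
    rw [PiLp.inner_apply]
    exact Finset.sum_congr rfl fun t _ => by simp [sq]
  have step1 : ∀ j : Fin r, (⟪v j, (WithLp.toLp 2 (A.mulVec (v j)) : EuclideanSpace ℝ (Fin n))⟫) ^ 2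
      ≤ ∑ t, (A.mulVec (v j) t) ^ 2 := by
    intro j
    have h := real_inner_mul_inner_self_le (v j) (WithLp.toLp 2 (A.mulVec (v j)) : EuclideanSpace ℝ (Fin n))
    have h1 : ⟪v j, v j⟫ = 1 := by
      rw [real_inner_self_eq_norm_sq, hv.1 j]; norm_num
    rw [h1, one_mul, key] at h
    calc _ = ⟪v j, (WithLp.toLp 2 (A.mulVec (v j)) : EuclideanSpace ℝ (Fin n))⟫ *
          ⟪v j, (WithLp.toLp 2 (A.mulVec (v j)) : EuclideanSpace ℝ (Fin n))⟫ := sq _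
      _ ≤ _ := h
  have step2 : ∀ (t : Fin n) (j : Fin r), A.mulVec (v j) t = ⟪R t, v j⟫ := by
    intro t j
    rw [PiLp.inner_apply]
    simp [hR, Matrix.mulVec, dotProduct, mul_comm]
  calc ∑ j : Fin r, (⟪v j, (WithLp.toLp 2 (A.mulVec (v j)) : EuclideanSpace ℝ (Fin n))⟫) ^ 2
      ≤ ∑ j : Fin r, ∑ t, (A.mulVec (v j) t) ^ 2 :=
        Finset.sum_le_sum fun j _ => step1 j
    _ = ∑ t, ∑ j : Fin r, (⟪R t, v j⟫) ^ 2 := by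
        rw [Finset.sum_comm]
        exact Finset.sum_congr rfl fun t _ => Finset.sum_congr rfl fun j _ => by rw [step2]
    _ ≤ ∑ t, ‖R t‖ ^ 2 := by
        refine Finset.sum_le_sum fun t _ => ?_
        have h := hv.sum_inner_products_le (x := R t) (s := Finset.univ)
        refine le_trans (le_of_eq ?_) h
        refine Finset.sum_congr rfl fun j _ => ?_
        rw [real_inner_comm, Real.norm_eq_abs, sq_abs]
    _ = frobSq A := by
        refine Finset.sum_congr rfl fun t _ => ?_
        rw [← real_inner_self_eq_norm_sq, key]

lemma inner_eq_dot {l : ℕ} (v : EuclideanSpace ℝ (Fin l)) (w : Fin l → ℝ) :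
    ⟪v, (WithLp.toLp 2 w : EuclideanSpace ℝ (Fin l))⟫ = v ⬝ᵥ w := by
  rw [PiLp.inner_apply]
  simp [dotProduct, RCLike.inner_apply, mul_comm]

lemma quadM_eq {d l : ℕ} (Y : Matrix (Fin l) (Fin (d+1)) ℝ) (v : EuclideanSpace ℝ (Fin l)) :
    ⟪v, (WithLp.toLp 2 ((Y * lorJ d * Yᵀ) *ᵥ v : Fin l → ℝ) : EuclideanSpace ℝ (Fin l))⟫
      = (∑ t, Y t 0 * v t) ^ 2 - ∑ j : Fin d, (∑ t, Y t j.succ * v t) ^ 2 := by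
  rw [inner_eq_dot]
  have hu : ∀ j : Fin (d+1), (Yᵀ *ᵥ (v : Fin l → ℝ)) j = ∑ t, Y t j * v t := by
    intro j
    simp [Matrix.mulVec, dotProduct, Matrix.transpose_apply]
  calc (v : Fin l → ℝ) ⬝ᵥ ((Y * lorJ d * Yᵀ) *ᵥ (v : Fin l → ℝ))
      = (Yᵀ *ᵥ (v : Fin l → ℝ)) ⬝ᵥ (lorJ d *ᵥ (Yᵀ *ᵥ (v : Fin l → ℝ))) := by
        rw [← Matrix.mulVec_mulVec, ← Matrix.mulVec_mulVec, dotProduct_mulVec,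
          ← Matrix.mulVec_transpose]
    _ = ∑ j : Fin (d+1), (Yᵀ *ᵥ (v : Fin l → ℝ)) j *
          ((if j = 0 then (1:ℝ) else -1) * (Yᵀ *ᵥ (v : Fin l → ℝ)) j) := by
        refine Finset.sum_congr rfl fun j _ => ?_
        rw [lorJ, Matrix.mulVec_diagonal]
    _ = _ := by
        rw [Fin.sum_univ_succ]
        simp only [if_pos rfl, Fin.succ_ne_zero, if_neg, one_mul]
        simp only [hu]
        ring_nf
        simp
        ring

lemma quadLam_eq {l : ℕ} (lam : Fin l → ℝ) (v : EuclideanSpace ℝ (Fin l)) :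
    ⟪v, (WithLp.toLp 2 (Matrix.diagonal lam *ᵥ v : Fin l → ℝ) : EuclideanSpace ℝ (Fin l))⟫
      = ∑ t, lam t * (v t) ^ 2 := by
  rw [inner_eq_dot]
  unfold dotProduct
  refine Finset.sum_congr rfl fun t _ => ?_
  rw [Matrix.mulVec_diagonal]
  ring

lemma quadA_eq {d l : ℕ} (Y : Matrix (Fin l) (Fin (d+1)) ℝ) (lam : Fin l → ℝ)
    (v : EuclideanSpace ℝ (Fin l)) :
    ⟪v, (WithLp.toLp 2 ((Y * lorJ d * Yᵀ - Matrix.diagonal lam) *ᵥ v : Fin l → ℝ) : EuclideanSpace ℝ (Fin l))⟫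
      = ((∑ t, Y t 0 * v t) ^ 2 - ∑ j : Fin d, (∑ t, Y t j.succ * v t) ^ 2)
          - ∑ t, lam t * (v t) ^ 2 := by
  calc ⟪v, (WithLp.toLp 2 ((Y * lorJ d * Yᵀ - Matrix.diagonal lam) *ᵥ v : Fin l → ℝ) :
        EuclideanSpace ℝ (Fin l))⟫
      = ⟪v, (WithLp.toLp 2 ((Y * lorJ d * Yᵀ) *ᵥ v : Fin l → ℝ) : EuclideanSpace ℝ (Fin l))⟫
        - ⟪v, (WithLp.toLp 2 (Matrix.diagonal lam *ᵥ v : Fin l → ℝ) : EuclideanSpace ℝ (Fin l))⟫ := by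
        rw [Matrix.sub_mulVec, WithLp.toLp_sub]
        exact inner_sub_right _ _ _
    _ = _ := by rw [quadM_eq, quadLam_eq]

lemma sum_sq_eq_one_of_norm_one {l : ℕ} {v : EuclideanSpace ℝ (Fin l)} (h : ‖v‖ = 1) :
    ∑ t, (v t) ^ 2 = 1 := by
  have : ⟪v, v⟫ = 1 := by rw [real_inner_self_eq_norm_sq, h]; norm_num
  rw [PiLp.inner_apply] at this
  rw [← this]
  exact Finset.sum_congr rfl fun t _ => by simp [sq]

lemma quadLam_ge_low {l : ℕ} {lam : Fin l → ℝ} (hdesc : ∀ i j : Fin l, i ≤ j → lam j ≤ lam i)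
    (ifin : Fin l) {v : EuclideanSpace ℝ (Fin l)}
    (hv : v ∈ coordSub l ↑(Finset.Iic ifin)) (hunit : ∑ t, (v t) ^ 2 = 1) :
    lam ifin ≤ ∑ t, lam t * (v t) ^ 2 := by
  calc lam ifin = ∑ t, lam ifin * (v t) ^ 2 := by rw [← Finset.mul_sum, hunit, mul_one]
    _ ≤ ∑ t, lam t * (v t) ^ 2 := by
      refine Finset.sum_le_sum fun t _ => ?_
      by_cases h : t ∈ Finset.Iic ifin
      · exact mul_le_mul_of_nonneg_right (hdesc t ifin (Finset.mem_Iic.mp h)) (sq_nonneg _)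
      · rw [hv t (by simpa using h)]; simp

lemma quadLam_le_high {l : ℕ} {lam : Fin l → ℝ} (hdesc : ∀ i j : Fin l, i ≤ j → lam j ≤ lam i)
    (ifin : Fin l) {v : EuclideanSpace ℝ (Fin l)}
    (hv : v ∈ coordSub l ↑(Finset.Ici ifin)) (hunit : ∑ t, (v t) ^ 2 = 1) :
    ∑ t, lam t * (v t) ^ 2 ≤ lam ifin := by
  have step : ∑ t, lam t * (v t) ^ 2 ≤ ∑ t, lam ifin * (v t) ^ 2 := by
    refine Finset.sum_le_sum fun t _ => ?_
    by_cases h : t ∈ Finset.Ici ifin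
    · exact mul_le_mul_of_nonneg_right (hdesc ifin t (Finset.mem_Ici.mp h)) (sq_nonneg _)
    · rw [hv t (by simpa using h)]; simp
  calc ∑ t, lam t * (v t) ^ 2 ≤ ∑ t, lam ifin * (v t) ^ 2 := step
    _ = lam ifin := by rw [← Finset.mul_sum, hunit, mul_one]

/-- Column `j` of `Y`, as a vector. -/
def colY {d l : ℕ} (Y : Matrix (Fin l) (Fin (d+1)) ℝ) (j : Fin (d+1)) :
    EuclideanSpace ℝ (Fin l) := WithLp.toLp 2 (fun t => Y t j)

lemma exists_good_family {d l : ℕ} (r k : ℕ) (hrl : r + d + 1 = l) (hkr : k ≤ r)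
    (Y : Matrix (Fin l) (Fin (d+1)) ℝ) :
    ∃ v : Fin r → EuclideanSpace ℝ (Fin l), Orthonormal ℝ v ∧
      ∀ (j : Fin r) (hj : (j : ℕ) + 1 < l),
        ((j : ℕ) < k → v j ∈ coordSub l ↑(Finset.Iic (⟨(j : ℕ) + 1, hj⟩ : Fin l)) ∧
            ⟪colY Y 0, v j⟫ = 0) ∧
        (k ≤ (j : ℕ) → v j ∈ coordSub l ↑(Finset.Ici (⟨(j : ℕ) + 1, hj⟩ : Fin l)) ∧
            ∀ jd : Fin d, ⟪colY Y jd.succ, v j⟫ = 0) := by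
  classical
  have hkl : ∀ j : Fin k, (j : ℕ) + 1 < l := fun j => by have := j.isLt; omega
  have hml : ∀ j : Fin (r - k), r - (j : ℕ) < l := fun j => by omega
  set O0 : Submodule ℝ (EuclideanSpace ℝ (Fin l)) := (span ℝ ({colY Y 0} : Set _))ᗮ with hO0
  set ON : Submodule ℝ (EuclideanSpace ℝ (Fin l)) :=
    (span ℝ (Set.range fun jd : Fin d => colY Y jd.succ))ᗮ with hON
  have hfinE : finrank ℝ (EuclideanSpace ℝ (Fin l)) = l := by
    simp [finrank_euclideanSpace]
  have hO0rank : l - 1 ≤ finrank ℝ O0 := by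
    rw [hO0]
    have h1 : finrank ℝ (span ℝ ({colY Y 0} : Set (EuclideanSpace ℝ (Fin l)))) ≤ 1 := by
      simpa using finrank_span_le_card ({colY Y 0} : Set (EuclideanSpace ℝ (Fin l)))
    have h2 := Submodule.finrank_add_finrank_orthogonal
      (span ℝ ({colY Y 0} : Set (EuclideanSpace ℝ (Fin l))))
    omega
  have hONrank : l - d ≤ finrank ℝ ON := by
    rw [hON]
    have h1 : finrank ℝ (span ℝ (Set.range fun jd : Fin d => colY Y jd.succ)) ≤ d :=
      finrank_span_range_le' _
    have h2 := Submodule.finrank_add_finrank_orthogonal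
      (span ℝ (Set.range fun jd : Fin d => colY Y jd.succ))
    omega
  obtain ⟨a, ha_on, ha_mem⟩ := exists_orthonormal_chain k
    (fun j => coordSub l ↑(Finset.Iic (⟨(j : ℕ) + 1, hkl j⟩ : Fin l)) ⊓ O0) (by
      intro j
      have hc := card_le_finrank_coordSub (Finset.Iic (⟨(j : ℕ) + 1, hkl j⟩ : Fin l))
      rw [Fin.card_Iic] at hc
      have hi := finrank_inf_ge (coordSub l ↑(Finset.Iic (⟨(j : ℕ) + 1, hkl j⟩ : Fin l))) O0
      rw [hfinE] at hi
      have := j.isLt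
      simp only [Fin.val_mk] at hc hi
      show (j : ℕ) + 1 ≤ finrank ℝ
        (coordSub l ↑(Finset.Iic (⟨(j : ℕ) + 1, hkl j⟩ : Fin l)) ⊓ O0 : Submodule ℝ _)
      omega)
  obtain ⟨b, hb_on, hb_mem⟩ := exists_orthonormal_chain (r - k)
    (fun j => coordSub l ↑(Finset.Ici (⟨r - (j : ℕ), hml j⟩ : Fin l)) ⊓ ON) (by
      intro j
      have hc := card_le_finrank_coordSub (Finset.Ici (⟨r - (j : ℕ), hml j⟩ : Fin l))
      rw [Fin.card_Ici] at hc
      have hi := finrank_inf_ge (coordSub l ↑(Finset.Ici (⟨r - (j : ℕ), hml j⟩ : Fin l))) ON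
      rw [hfinE] at hi
      have := j.isLt
      simp only [Fin.val_mk] at hc hi
      show (j : ℕ) + 1 ≤ finrank ℝ
        (coordSub l ↑(Finset.Ici (⟨r - (j : ℕ), hml j⟩ : Fin l)) ⊓ ON : Submodule ℝ _)
      omega)
  refine ⟨fun j => if h : (j : ℕ) < k then a ⟨j, h⟩ else b ⟨r - 1 - j, by have := j.isLt; omega⟩,
    ?_, ?_⟩
  · -- orthonormality
    rw [orthonormal_iff_ite]
    intro i j
    have hcross : ∀ (i' : Fin k) (j' : Fin (r - k)), ⟪a i', b j'⟫ = 0 := by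
      intro i' j'
      refine orthogonal_of_disjoint_support ?_
        ((Submodule.mem_inf.mp (ha_mem i')).1) ((Submodule.mem_inf.mp (hb_mem j')).1)
      intro t ht hbt
      simp only [Finset.coe_Iic, Set.mem_Iic, Finset.coe_Ici, Set.mem_Ici, Fin.le_def,
        Fin.val_mk] at ht hbt
      have := i'.isLt
      have := j'.isLt
      omega
    by_cases hi : (i : ℕ) < k <;> by_cases hj : (j : ℕ) < k
    · rw [dif_pos hi, dif_pos hj]
      have h := orthonormal_iff_ite.mp ha_on ⟨i, hi⟩ ⟨j, hj⟩
      by_cases hij : i = j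
      · subst hij; simpa using h
      · have hne : (⟨(i : ℕ), hi⟩ : Fin k) ≠ ⟨(j : ℕ), hj⟩ := by
          intro hh
          have hvv := congrArg (fun x : Fin k => (x : ℕ)) hh
          simp only [Fin.val_mk] at hvv
          exact hij (Fin.ext hvv)
        rw [if_neg hne] at h
        rw [h, if_neg hij]
    · rw [dif_pos hi, dif_neg hj, hcross,
        if_neg (fun hh : i = j => hj (by rw [← hh]; exact hi))]
    · rw [dif_neg hi, dif_pos hj, real_inner_comm, hcross,
        if_neg (fun hh : i = j => hi (by rw [hh]; exact hj))]
    · rw [dif_neg hi, dif_neg hj]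
      have h := orthonormal_iff_ite.mp hb_on ⟨r - 1 - i, by have := i.isLt; omega⟩
        ⟨r - 1 - j, by have := j.isLt; omega⟩
      by_cases hij : i = j
      · subst hij; simpa using h
      · have hir := i.isLt
        have hjr := j.isLt
        have hne : (⟨r - 1 - (i : ℕ), by omega⟩ : Fin (r - k)) ≠ ⟨r - 1 - (j : ℕ), by omega⟩ := by
          intro hh
          have hvv := congrArg (fun x : Fin (r - k) => (x : ℕ)) hh
          simp only [Fin.val_mk] at hvv
          exact hij (Fin.ext (by omega))
        rw [if_neg hne] at h
        rw [h, if_neg hij]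
  · -- membership properties
    intro j hj
    constructor
    · intro hjk
      simp only [dif_pos hjk]
      have h1 := (Submodule.mem_inf.mp (ha_mem ⟨j, hjk⟩)).1
      have h2 := (Submodule.mem_inf.mp (ha_mem ⟨j, hjk⟩)).2
      refine ⟨h1, ?_⟩
      exact (Submodule.mem_orthogonal _ _).mp h2 _ (Submodule.subset_span rfl)
    · intro hjk
      have hjr := j.isLt
      simp only [dif_neg (show ¬((j : ℕ) < k) by omega)]
      have h1 := (Submodule.mem_inf.mp (hb_mem ⟨r - 1 - j, by omega⟩)).1
      have h2 := (Submodule.mem_inf.mp (hb_mem ⟨r - 1 - j, by omega⟩)).2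
      constructor
      · have heq : (⟨r - (r - 1 - (j : ℕ)), hml ⟨r - 1 - j, by omega⟩⟩ : Fin l)
            = (⟨(j : ℕ) + 1, hj⟩ : Fin l) := by
          apply Fin.ext
          simp only [Fin.val_mk]
          omega
        rwa [heq] at h1
      · intro jd
        exact (Submodule.mem_orthogonal _ _).mp h2 _
          (Submodule.subset_span (Set.mem_range_self jd))

lemma main_aux {d l : ℕ} (r k : ℕ) (hrl : r + d + 1 = l) (hkr : k ≤ r)
    (lam : Fin l → ℝ) (hdesc : ∀ i j : Fin l, i ≤ j → lam j ≤ lam i)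
    (hkpos : ∀ (i : ℕ) (hil : i < l), 1 ≤ i → i ≤ k → 0 ≤ lam ⟨i, hil⟩)
    (hkneg : ∀ (i : ℕ) (hil : i < l), k < i → i ≤ r → lam ⟨i, hil⟩ < 0)
    (Y : Matrix (Fin l) (Fin (d + 1)) ℝ) :
    (∑ j : Fin r, lam ⟨(j : ℕ) + 1, by have := j.isLt; omega⟩ ^ 2) ≤
      frobSq (Y * lorJ d * Yᵀ - Matrix.diagonal lam) := by
  obtain ⟨v, hv_on, hv_mem⟩ := exists_good_family r k hrl hkr Y
  have hbound : ∀ j : Fin r,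
      lam ⟨(j : ℕ) + 1, by have := j.isLt; omega⟩ ^ 2 ≤
        (⟪v j, (WithLp.toLp 2 ((Y * lorJ d * Yᵀ - Matrix.diagonal lam) *ᵥ v j : Fin l → ℝ) :
          EuclideanSpace ℝ (Fin l))⟫) ^ 2 := by
    intro j
    have hj : (j : ℕ) + 1 < l := by have := j.isLt; omega
    have hunit : ∑ t, (v j t) ^ 2 = 1 := sum_sq_eq_one_of_norm_one (hv_on.1 j)
    obtain ⟨hposc, hnegc⟩ := hv_mem j hj
    rw [quadA_eq]
    by_cases hjk : (j : ℕ) < k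
    · obtain ⟨hsupp, hc0⟩ := hposc hjk
      have hlam : 0 ≤ lam ⟨(j : ℕ) + 1, hj⟩ := hkpos _ hj (by omega) (by omega)
      have hzero : ∑ t, Y t 0 * v j t = 0 := by
        rw [inner_eq_dot] at hc0
        simpa [dotProduct, colY] using hc0
      have hL : lam ⟨(j : ℕ) + 1, hj⟩ ≤ ∑ t, lam t * (v j t) ^ 2 :=
        quadLam_ge_low hdesc _ hsupp hunit
      have hS2 : (0:ℝ) ≤ ∑ jd : Fin d, (∑ t, Y t jd.succ * v j t) ^ 2 :=
        Finset.sum_nonneg fun jd _ => sq_nonneg _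
      rw [hzero]
      nlinarith [hL, hS2, hlam]
    · obtain ⟨hsupp, hcN⟩ := hnegc (by omega)
      have hlam : lam ⟨(j : ℕ) + 1, hj⟩ < 0 := hkneg _ hj (by omega) (by have := j.isLt; omega)
      have hzero : ∀ jd : Fin d, ∑ t, Y t jd.succ * v j t = 0 := by
        intro jd
        have h := hcN jd
        rw [inner_eq_dot] at h
        simpa [dotProduct, colY] using h
      have hS2 : ∑ jd : Fin d, (∑ t, Y t jd.succ * v j t) ^ 2 = 0 := by
        refine Finset.sum_eq_zero fun jd _ => ?_
        rw [hzero jd]; ring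
      have hL : ∑ t, lam t * (v j t) ^ 2 ≤ lam ⟨(j : ℕ) + 1, hj⟩ :=
        quadLam_le_high hdesc _ hsupp hunit
      rw [hS2]
      nlinarith [hL, hlam, sq_nonneg (∑ t, Y t 0 * v j t)]
  calc (∑ j : Fin r, lam ⟨(j : ℕ) + 1, by have := j.isLt; omega⟩ ^ 2)
      ≤ ∑ j : Fin r, (⟪v j, (WithLp.toLp 2 ((Y * lorJ d * Yᵀ - Matrix.diagonal lam) *ᵥ v j : Fin l → ℝ) :
          EuclideanSpace ℝ (Fin l))⟫) ^ 2 := Finset.sum_le_sum fun j _ => hbound j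
    _ ≤ _ := quad_sum_le_frobSq hv_on _

/-- lower bound `‖Y J Yᵀ − Λ‖_F² ≥ Σ_{i=2}^{l−d} λ_i²`. -/
theorem stmt_7 {d l : ℕ} (hd : 1 ≤ d) (hl : d + 1 ≤ l)
    (lam : Fin l → ℝ) (hdesc : ∀ i j : Fin l, i ≤ j → lam j ≤ lam i) :
    ∀ Y : Matrix (Fin l) (Fin (d + 1)) ℝ,
      (∑ i ∈ Finset.univ.filter (fun i : Fin l => 1 ≤ (i : ℕ) ∧ (i : ℕ) < l - d), lam i ^ 2) ≤
        frobSq (Y * lorJ d * Yᵀ - Matrix.diagonal lam) := by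
  intro Y
  classical
  have hrl : (l - d - 1) + d + 1 = l := by omega
  set P : ℕ → Prop := fun i => ∃ h : i < l, 1 ≤ i ∧ 0 ≤ lam ⟨i, h⟩ with hP
  set k : ℕ := Nat.findGreatest P (l - d - 1) with hk
  have hkr : k ≤ l - d - 1 := Nat.findGreatest_le _
  have hkpos : ∀ (i : ℕ) (hil : i < l), 1 ≤ i → i ≤ k → 0 ≤ lam ⟨i, hil⟩ := by
    intro i hil h1 hik
    have hk0 : k ≠ 0 := by omega
    obtain ⟨hkl, hk1, hlamk⟩ : P k := Nat.findGreatest_of_ne_zero hk.symm hk0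
    have hle : lam ⟨k, hkl⟩ ≤ lam ⟨i, hil⟩ :=
      hdesc ⟨i, hil⟩ ⟨k, hkl⟩ (by simpa [Fin.le_def] using hik)
    linarith
  have hkneg : ∀ (i : ℕ) (hil : i < l), k < i → i ≤ l - d - 1 → lam ⟨i, hil⟩ < 0 := by
    intro i hil hki hir
    by_contra hcon
    push_neg at hcon
    exact Nat.findGreatest_is_greatest (hk ▸ hki) hir ⟨hil, by omega, hcon⟩
  have hmain := main_aux (l - d - 1) k hrl hkr lam hdesc hkpos hkneg Y
  refine le_trans (le_of_eq ?_) hmain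
  refine Finset.sum_bij' (fun a ha => (⟨(a : ℕ) - 1, by
      have := (Finset.mem_filter.mp ha).2
      omega⟩ : Fin (l - d - 1)))
    (fun b _ => (⟨(b : ℕ) + 1, by have := b.isLt; omega⟩ : Fin l)) ?_ ?_ ?_ ?_ ?_
  · intro a ha
    exact Finset.mem_univ _
  · intro b hb
    simp only [Finset.mem_filter, Finset.mem_univ, true_and, Fin.val_mk]
    have := b.isLt
    omega
  · intro a ha
    simp only [Finset.mem_filter, Finset.mem_univ, true_and] at ha
    apply Fin.ext
    simp only [Fin.val_mk]
    omega
  · intro b hb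
    apply Fin.ext
    simp only [Fin.val_mk]
    omega
  · intro a ha
    simp only [Finset.mem_filter, Finset.mem_univ, true_and] at ha
    congr 1
    refine congrArg lam (Fin.ext ?_)
    show (a : ℕ) = (a : ℕ) - 1 + 1
    omega
end

section
/- (Recovery of landmarks up to positive Lorentz isometry.) Let l ≥ d+1 and let X, Y ∈ ℝ^{l×(d+1)} both have rank d+1, with every row of X and every row of Y lying in H_d. If X J X^⊤ = Y J Y^⊤, then there exists a positive Lorentz matrix T such that Y = X T. -/
open Matrix Finset

lemma lorJ_mul_lorJ (d : ℕ) : lorJ d * lorJ d = 1 := by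
  ext i j
  by_cases h : i = j <;>
    simp [lorJ, Matrix.diagonal_mul_diagonal, Matrix.diagonal_apply, Matrix.one_apply, h] <;>
    split_ifs <;> ring

lemma isUnit_of_rank_eq {n : ℕ} (A : Matrix (Fin n) (Fin n) ℝ) (h : A.rank = n) : IsUnit A := by
  rw [← Matrix.mulVec_surjective_iff_isUnit]
  have hr : LinearMap.range A.mulVecLin = ⊤ := by
    apply Submodule.eq_top_of_finrank_eq
    rw [show Module.finrank ℝ (LinearMap.range A.mulVecLin) = A.rank from rfl, h,
      Module.finrank_fin_fun]
  intro v
  obtain ⟨w, hw⟩ := LinearMap.range_eq_top.mp hr v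
  exact ⟨w, hw⟩

lemma quad_form (d : ℕ) (v : Fin (d + 1) → ℝ) :
    ∑ k : Fin (d + 1), v k * (if k = 0 then (1 : ℝ) else -1) * v k
      = v 0 ^ 2 - ∑ i : Fin d, v i.succ ^ 2 := by
  rw [Fin.sum_univ_succ]
  simp [Fin.succ_ne_zero, sq, Finset.sum_neg_distrib]
  ring

/-- recovery of landmarks up to positive Lorentz isometry. -/
theorem stmt_12 {d l : ℕ} (hd : 1 ≤ d) (hl : d + 1 ≤ l)
    (X Y : Matrix (Fin l) (Fin (d + 1)) ℝ)
    (hXrank : X.rank = d + 1) (hYrank : Y.rank = d + 1)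
    (hXrows : ∀ i, onHyperboloid d (X i)) (hYrows : ∀ i, onHyperboloid d (Y i))
    (hGram : X * lorJ d * Xᵀ = Y * lorJ d * Yᵀ) :
    ∃ T : Matrix (Fin (d + 1)) (Fin (d + 1)) ℝ, IsPosLorentz d T ∧ Y = X * T := by
  have hJJ := lorJ_mul_lorJ d
  have hYU : IsUnit (Yᵀ * Y) :=
    isUnit_of_rank_eq _ (by rw [Matrix.rank_transpose_mul_self, hYrank])
  have hXU : IsUnit (Xᵀ * X) :=
    isUnit_of_rank_eq _ (by rw [Matrix.rank_transpose_mul_self, hXrank])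
  have hYdet : IsUnit (Yᵀ * Y).det := (Matrix.isUnit_iff_isUnit_det _).mp hYU
  have hXdet : IsUnit (Xᵀ * X).det := (Matrix.isUnit_iff_isUnit_det _).mp hXU
  obtain ⟨T, hT⟩ : ∃ T : Matrix (Fin (d + 1)) (Fin (d + 1)) ℝ,
      T = lorJ d * Xᵀ * Y * (Yᵀ * Y)⁻¹ * lorJ d := ⟨_, rfl⟩
  have hYXT : Y = X * T := by
    have h1 : Y * lorJ d * Yᵀ * (Y * (Yᵀ * Y)⁻¹ * lorJ d) = Y := by
      calc Y * lorJ d * Yᵀ * (Y * (Yᵀ * Y)⁻¹ * lorJ d)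
          = Y * lorJ d * (Yᵀ * Y * (Yᵀ * Y)⁻¹) * lorJ d := by
            simp only [Matrix.mul_assoc]
        _ = Y * (lorJ d * lorJ d) := by
            rw [Matrix.mul_nonsing_inv _ hYdet]
            simp only [Matrix.mul_one, Matrix.mul_assoc]
        _ = Y := by rw [hJJ, Matrix.mul_one]
    calc Y = X * lorJ d * Xᵀ * (Y * (Yᵀ * Y)⁻¹ * lorJ d) := by rw [hGram, h1]
      _ = X * T := by rw [hT]; simp only [Matrix.mul_assoc]
  have cancel : ∀ M : Matrix (Fin (d + 1)) (Fin (d + 1)) ℝ,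
      (Xᵀ * X)⁻¹ * Xᵀ * (X * M * Xᵀ) * (X * (Xᵀ * X)⁻¹) = M := by
    intro M
    calc (Xᵀ * X)⁻¹ * Xᵀ * (X * M * Xᵀ) * (X * (Xᵀ * X)⁻¹)
        = (Xᵀ * X)⁻¹ * (Xᵀ * X) * M * (Xᵀ * X) * (Xᵀ * X)⁻¹ := by
          simp only [Matrix.mul_assoc]
      _ = M := by
          rw [Matrix.nonsing_inv_mul _ hXdet, Matrix.one_mul, Matrix.mul_assoc,
            Matrix.mul_nonsing_inv _ hXdet, Matrix.mul_one]
  have hTJT' : T * lorJ d * Tᵀ = lorJ d := by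
    have h2 : X * (T * lorJ d * Tᵀ) * Xᵀ = X * lorJ d * Xᵀ := by
      have e : X * (T * lorJ d * Tᵀ) * Xᵀ = X * T * lorJ d * (X * T)ᵀ := by
        rw [Matrix.transpose_mul]
        simp only [Matrix.mul_assoc]
      rw [e, ← hYXT, ← hGram]
    have h3 := congrArg
      (fun M => (Xᵀ * X)⁻¹ * Xᵀ * M * (X * (Xᵀ * X)⁻¹)) h2
    rwa [cancel, cancel] at h3
  have hright : T * (lorJ d * Tᵀ * lorJ d) = 1 := by
    calc T * (lorJ d * Tᵀ * lorJ d) = T * lorJ d * Tᵀ * lorJ d := by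
          simp only [Matrix.mul_assoc]
      _ = 1 := by rw [hTJT', hJJ]
  have hleft : lorJ d * Tᵀ * lorJ d * T = 1 := mul_eq_one_comm.mp hright
  have hTJT : Tᵀ * lorJ d * T = lorJ d := by
    calc Tᵀ * lorJ d * T = lorJ d * (lorJ d * Tᵀ * lorJ d * T) := by
          simp only [← Matrix.mul_assoc, hJJ, Matrix.one_mul]
      _ = lorJ d := by rw [hleft, Matrix.mul_one]
  -- positivity of T 0 0
  have i0 : Fin l := ⟨0, by omega⟩
  obtain ⟨hx1, hx0⟩ := hXrows i0
  obtain ⟨hy1, hy0⟩ := hYrows i0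
  have e1 : ∀ k, (Tᵀ * lorJ d) 0 k = T k 0 * (if k = 0 then (1 : ℝ) else -1) := by
    intro k
    rw [lorJ, Matrix.mul_diagonal, Matrix.transpose_apply]
  have hcc : T 0 0 ^ 2 - ∑ i : Fin d, T i.succ 0 ^ 2 = 1 := by
    have h00 := congrFun (congrFun hTJT 0) 0
    rw [Matrix.mul_apply] at h00
    simp only [e1] at h00
    have hq := quad_form d (fun k => T k 0)
    rw [hq] at h00
    simpa [lorJ, Matrix.diagonal_apply_eq] using h00
  have hxx : X i0 0 ^ 2 - ∑ i : Fin d, X i0 i.succ ^ 2 = 1 := by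
    rw [lprod] at hx1
    simp only [← pow_two] at hx1
    exact hx1
  have hpos : 0 < X i0 0 * T 0 0 + ∑ i : Fin d, X i0 i.succ * T i.succ 0 := by
    have hy : Y i0 0 = ∑ k, X i0 k * T k 0 := by rw [hYXT, Matrix.mul_apply]
    rw [hy, Fin.sum_univ_succ] at hy0
    exact hy0
  have hcs := Finset.sum_mul_sq_le_sq_mul_sq Finset.univ
    (fun i : Fin d => X i0 i.succ) (fun i : Fin d => T i.succ 0)
  have hSx : (0 : ℝ) ≤ ∑ i : Fin d, X i0 i.succ ^ 2 :=
    Finset.sum_nonneg fun i _ => sq_nonneg _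
  have hSc : (0 : ℝ) ≤ ∑ i : Fin d, T i.succ 0 ^ 2 :=
    Finset.sum_nonneg fun i _ => sq_nonneg _
  have hT00 : 0 < T 0 0 := by
    by_contra hc0
    push_neg at hc0
    have hab : X i0 0 * T 0 0 ≤ 0 := mul_nonpos_of_nonneg_of_nonpos hx0.le hc0
    have hsub : 0 < (∑ i : Fin d, X i0 i.succ * T i.succ 0) - X i0 0 * T 0 0 := by
      linarith
    nlinarith [mul_pos hpos hsub, hcs, hxx, hcc, hSx, hSc,
      mul_nonneg hSx hSc]
  exact ⟨T, ⟨hTJT, hT00⟩, hYXT⟩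
end

section
/- Let l ≥ d+1 and let X ∈ ℝ^{l×(d+1)} have rank d+1. Then the symmetric matrix X J X^⊤ has exactly one strictly positive eigenvalue, exactly d strictly negative eigenvalues, and the eigenvalue 0 with multiplicity l−d−1 (all counted with multiplicity). -/
open Matrix Finset

lemma lorJ_quad {d : ℕ} (w : Fin (d + 1) → ℝ) :
    w ⬝ᵥ (lorJ d *ᵥ w) = w 0 ^ 2 - ∑ j : Fin d, w j.succ ^ 2 := by
  simp only [lorJ, dotProduct, mulVec_diagonal]
  rw [Fin.sum_univ_succ]
  simp [Fin.succ_ne_zero, pow_two, mul_comm, Finset.sum_neg_distrib, sub_eq_add_neg]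

lemma quad_eq {d l : ℕ} (X : Matrix (Fin l) (Fin (d + 1)) ℝ) (v : Fin l → ℝ) :
    v ⬝ᵥ ((X * lorJ d * Xᵀ) *ᵥ v) = (Xᵀ *ᵥ v) ⬝ᵥ (lorJ d *ᵥ (Xᵀ *ᵥ v)) := by
  rw [← mulVec_mulVec, ← mulVec_mulVec, dotProduct_mulVec, ← mulVec_transpose]

lemma quad_spectral {n : ℕ} {A : Matrix (Fin n) (Fin n) ℝ} (hA : A.IsHermitian)
    (c : Fin n → ℝ) :
    ((hA.eigenvectorUnitary : Matrix (Fin n) (Fin n) ℝ) *ᵥ c) ⬝ᵥ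
      (A *ᵥ ((hA.eigenvectorUnitary : Matrix (Fin n) (Fin n) ℝ) *ᵥ c))
      = ∑ i, hA.eigenvalues i * c i ^ 2 := by
  set U := (hA.eigenvectorUnitary : Matrix (Fin n) (Fin n) ℝ) with hU
  have hstar : star U * U = 1 := Unitary.coe_star_mul_self hA.eigenvectorUnitary
  conv_lhs => rw [hA.spectral_theorem, Unitary.conjStarAlgAut_apply]
  have hsU : star U = Uᵀ := by
    rw [Matrix.star_eq_conjTranspose]
    ext i j; simp [conjTranspose_apply]
  have hUT : Uᵀ * U = 1 := by rw [← hsU, hstar]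
  rw [mulVec_mulVec, ← hU, mul_assoc (U * diagonal (RCLike.ofReal ∘ hA.eigenvalues)) (star U) U,
    hstar, mul_one, dotProduct_mulVec, ← vecMul_transpose, vecMul_vecMul, ← mul_assoc, hUT,
    one_mul]
  simp [vecMul_diagonal, dotProduct, pow_two]
  exact Finset.sum_congr rfl fun i _ => by ring


/-- for `X` of full column rank `d+1`, the matrix `X J Xᵀ` has
exactly one positive eigenvalue, exactly `d` negative eigenvalues, and the
eigenvalue `0` with multiplicity `l − d − 1`. -/
theorem stmt_14 {d l : ℕ} (hd : 1 ≤ d) (hl : d + 1 ≤ l)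
    (X : Matrix (Fin l) (Fin (d + 1)) ℝ) (hrank : X.rank = d + 1)
    (hM : (X * lorJ d * Xᵀ).IsHermitian) :
    (Finset.univ.filter fun i => 0 < hM.eigenvalues i).card = 1 ∧
    (Finset.univ.filter fun i => hM.eigenvalues i < 0).card = d ∧
    (Finset.univ.filter fun i => hM.eigenvalues i = 0).card = l - (d + 1) := by
  classical
  set lam : Fin l → ℝ := hM.eigenvalues with hlam
  set U : Matrix (Fin l) (Fin l) ℝ := (hM.eigenvectorUnitary : Matrix (Fin l) (Fin l) ℝ) with hU
  have hJ2 : lorJ d * lorJ d = 1 := by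
    rw [lorJ, diagonal_mul_diagonal]
    ext i j
    rcases eq_or_ne i j with rfl | hij
    · by_cases h : i = 0 <;> simp [h, Matrix.diagonal_apply_eq, Matrix.one_apply]
    · simp [Matrix.diagonal_apply_ne _ hij, Matrix.one_apply, hij]
  have hXinj : Function.Injective X.mulVecLin := by
    rw [← LinearMap.ker_eq_bot]
    have h1 := X.mulVecLin.finrank_range_add_finrank_ker
    have h2 : Module.finrank ℝ (LinearMap.range X.mulVecLin) = d + 1 := hrank
    rw [h2, Module.finrank_pi, Fintype.card_fin] at h1
    have h3 : Module.finrank ℝ (LinearMap.ker X.mulVecLin) = 0 := by omega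
    exact Submodule.finrank_eq_zero.mp h3
  have hker : LinearMap.ker (X * lorJ d * Xᵀ).mulVecLin = LinearMap.ker Xᵀ.mulVecLin := by
    ext v
    simp only [LinearMap.mem_ker, mulVecLin_apply]
    constructor
    · intro h
      have hJv : ∀ w : Fin (d + 1) → ℝ, lorJ d *ᵥ (lorJ d *ᵥ w) = w := by
        intro w
        rw [mulVec_mulVec, hJ2, one_mulVec]
      have h1 : X.mulVecLin (lorJ d *ᵥ (Xᵀ *ᵥ v)) = X.mulVecLin 0 := by
        simp only [mulVecLin_apply, mulVec_mulVec, mulVec_zero, ← Matrix.mul_assoc]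
        exact h
      have h2 : lorJ d *ᵥ (Xᵀ *ᵥ v) = 0 := hXinj h1
      rw [← hJv (Xᵀ *ᵥ v), h2, mulVec_zero]
    · intro h
      rw [← mulVec_mulVec, h, mulVec_zero]
  have hrankM : (X * lorJ d * Xᵀ).rank = d + 1 := by
    have h1 := (X * lorJ d * Xᵀ).mulVecLin.finrank_range_add_finrank_ker
    have h2 := Xᵀ.mulVecLin.finrank_range_add_finrank_ker
    have e1 : (X * lorJ d * Xᵀ).rank
        = Module.finrank ℝ (LinearMap.range (X * lorJ d * Xᵀ).mulVecLin) := rfl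
    have e2 : Xᵀ.rank = Module.finrank ℝ (LinearMap.range Xᵀ.mulVecLin) := rfl
    have h3 : Xᵀ.rank = d + 1 := by rw [rank_transpose, hrank]
    rw [e2] at h3
    rw [hker] at h1
    rw [Module.finrank_pi, Fintype.card_fin] at h1 h2
    rw [e1]
    omega
  have hcount : (univ.filter fun i => lam i ≠ 0).card = d + 1 := by
    have h := hM.rank_eq_card_non_zero_eigs
    rw [hrankM, Fintype.card_subtype] at h
    exact h.symm
  -- positive eigenvalue count ≤ 1
  have hpos : (univ.filter fun i => 0 < lam i).card ≤ 1 := by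
    set S := univ.filter fun i => 0 < lam i with hS
    set T : ({i // i ∈ S} → ℝ) →ₗ[ℝ] ℝ :=
      (LinearMap.proj 0).comp (Xᵀ.mulVecLin.comp (U.mulVecLin.comp
        (Function.ExtendByZero.linearMap ℝ (fun i : {i // i ∈ S} => (i : Fin l))))) with hT
    have hTinj : Function.Injective T := by
      rw [injective_iff_map_eq_zero]
      intro c hc
      set c' : Fin l → ℝ := Function.extend (fun i : {i // i ∈ S} => (i : Fin l)) c 0 with hc'
      have hc'mem : ∀ i (h : i ∈ S), c' i = c ⟨i, h⟩ := fun i h =>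
        Subtype.val_injective.extend_apply c 0 ⟨i, h⟩
      have hc'nmem : ∀ i, i ∉ S → c' i = 0 := by
        intro i h
        rw [hc', Function.extend_apply']
        · rfl
        · rintro ⟨a, rfl⟩; exact h a.2
      simp only [hT, LinearMap.comp_apply, mulVecLin_apply, LinearMap.proj_apply] at hc
      have hcc : (Function.ExtendByZero.linearMap ℝ (fun i : {i // i ∈ S} => (i : Fin l))) c = c' :=
        rfl
      rw [hcc] at hc
      have e1 := quad_spectral hM c'
      have e2 : ((U *ᵥ c') ⬝ᵥ ((X * lorJ d * Xᵀ) *ᵥ (U *ᵥ c'))) =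
          (Xᵀ *ᵥ (U *ᵥ c')) 0 ^ 2 - ∑ j : Fin d, (Xᵀ *ᵥ (U *ᵥ c')) j.succ ^ 2 := by
        rw [quad_eq, lorJ_quad]
      rw [← hU, ← hlam] at e1
      have hsum : 0 ≤ ∑ j : Fin d, (Xᵀ *ᵥ (U *ᵥ c')) j.succ ^ 2 :=
        Finset.sum_nonneg fun j _ => sq_nonneg _
      have hle : ∑ i, lam i * c' i ^ 2 ≤ 0 := by
        rw [← e1, e2, hc]
        simpa using hsum
      have hterm : ∀ i ∈ univ, 0 ≤ lam i * c' i ^ 2 := by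
        intro i _
        by_cases h : i ∈ S
        · have h1 : 0 < lam i := (Finset.mem_filter.mp h).2
          positivity
        · rw [hc'nmem i h]; simp
      have hzero := (Finset.sum_eq_zero_iff_of_nonneg hterm).mp
        (le_antisymm hle (Finset.sum_nonneg hterm))
      funext i
      obtain ⟨i, hi⟩ := i
      have h1 : 0 < lam i := (Finset.mem_filter.mp hi).2
      have h2 := hzero i (mem_univ i)
      have h3 : c' i = 0 := by
        rcases mul_eq_zero.mp h2 with h | h
        · exact absurd h (ne_of_gt h1)
        · exact pow_eq_zero_iff (by norm_num) |>.mp h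
      have := hc'mem i hi
      rw [h3] at this
      exact this.symm
    have hfr := LinearMap.finrank_le_finrank_of_injective hTinj
    simpa [Module.finrank_pi, Fintype.card_coe] using hfr
  -- negative eigenvalue count ≤ d
  have hneg : (univ.filter fun i => lam i < 0).card ≤ d := by
    set S := univ.filter fun i => lam i < 0 with hS
    set T : ({i // i ∈ S} → ℝ) →ₗ[ℝ] (Fin d → ℝ) :=
      (LinearMap.funLeft ℝ ℝ (Fin.succ : Fin d → Fin (d + 1))).comp
        (Xᵀ.mulVecLin.comp (U.mulVecLin.comp
        (Function.ExtendByZero.linearMap ℝ (fun i : {i // i ∈ S} => (i : Fin l))))) with hT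
    have hTinj : Function.Injective T := by
      rw [injective_iff_map_eq_zero]
      intro c hc
      set c' : Fin l → ℝ := Function.extend (fun i : {i // i ∈ S} => (i : Fin l)) c 0 with hc'
      have hc'mem : ∀ i (h : i ∈ S), c' i = c ⟨i, h⟩ := fun i h =>
        Subtype.val_injective.extend_apply c 0 ⟨i, h⟩
      have hc'nmem : ∀ i, i ∉ S → c' i = 0 := by
        intro i h
        rw [hc', Function.extend_apply']
        · rfl
        · rintro ⟨a, rfl⟩; exact h a.2
      simp only [hT, LinearMap.comp_apply, mulVecLin_apply] at hc
      have hcc : (Function.ExtendByZero.linearMap ℝ (fun i : {i // i ∈ S} => (i : Fin l))) c = c' :=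
        rfl
      rw [hcc] at hc
      have hc2 : (Xᵀ *ᵥ (U *ᵥ c')) ∘ Fin.succ = 0 := hc
      have hcj : ∀ j : Fin d, (Xᵀ *ᵥ (U *ᵥ c')) j.succ = 0 := fun j => congrFun hc2 j
      have e1 := quad_spectral hM c'
      have e2 : ((U *ᵥ c') ⬝ᵥ ((X * lorJ d * Xᵀ) *ᵥ (U *ᵥ c'))) =
          (Xᵀ *ᵥ (U *ᵥ c')) 0 ^ 2 - ∑ j : Fin d, (Xᵀ *ᵥ (U *ᵥ c')) j.succ ^ 2 := by
        rw [quad_eq, lorJ_quad]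
      rw [← hU, ← hlam] at e1
      have hge : 0 ≤ ∑ i, lam i * c' i ^ 2 := by
        rw [← e1, e2]
        have : ∑ j : Fin d, (Xᵀ *ᵥ (U *ᵥ c')) j.succ ^ 2 = 0 :=
          Finset.sum_eq_zero fun j _ => by rw [hcj j]; ring
        rw [this]
        simpa using sq_nonneg _
      have hterm : ∀ i ∈ univ, lam i * c' i ^ 2 ≤ 0 := by
        intro i _
        by_cases h : i ∈ S
        · have h1 : lam i < 0 := (Finset.mem_filter.mp h).2
          have := sq_nonneg (c' i)
          nlinarith
        · rw [hc'nmem i h]; simp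
      have hzero := (Finset.sum_eq_zero_iff_of_nonpos hterm).mp
        (le_antisymm (Finset.sum_nonpos hterm) hge)
      funext i
      obtain ⟨i, hi⟩ := i
      have h1 : lam i < 0 := (Finset.mem_filter.mp hi).2
      have h2 := hzero i (mem_univ i)
      have h3 : c' i = 0 := by
        rcases mul_eq_zero.mp h2 with h | h
        · exact absurd h (ne_of_lt h1)
        · exact pow_eq_zero_iff (by norm_num) |>.mp h
      have := hc'mem i hi
      rw [h3] at this
      exact this.symm
    have hfr := LinearMap.finrank_le_finrank_of_injective hTinj
    simpa [Module.finrank_pi, Fintype.card_coe, Fintype.card_fin] using hfr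
  -- combine
  have hsplit : (univ.filter fun i => lam i ≠ 0)
      = (univ.filter fun i => 0 < lam i) ∪ (univ.filter fun i => lam i < 0) := by
    ext i
    simp only [mem_filter, mem_union, mem_univ, true_and]
    constructor
    · intro h
      rcases h.lt_or_gt with h | h
      · exact Or.inr h
      · exact Or.inl h
    · rintro (h | h)
      · exact ne_of_gt h
      · exact ne_of_lt h
  have hdisj : Disjoint (univ.filter fun i => 0 < lam i) (univ.filter fun i => lam i < 0) := by
    rw [Finset.disjoint_left]
    intro i h1 h2
    simp only [mem_filter] at h1 h2
    linarith [h1.2, h2.2]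
  have hpq : (univ.filter fun i => 0 < lam i).card + (univ.filter fun i => lam i < 0).card
      = d + 1 := by
    rw [← Finset.card_union_of_disjoint hdisj, ← hsplit, hcount]
  have hzcard : (univ.filter fun i => lam i = 0).card = l - (d + 1) := by
    have h := Finset.card_filter_add_card_filter_not
      (s := (univ : Finset (Fin l))) (p := fun i => lam i ≠ 0)
    simp only [not_not] at h
    rw [hcount, Finset.card_univ, Fintype.card_fin] at h
    omega
  exact ⟨by omega, by omega, hzcard⟩
end
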